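/- arXiv:2101.09326 — 4 statements merged into one kernel-verified Lean document; each statement's English description precedes it below -/
import Mathlib

section
/- Let A be a q×q integer matrix all of whose rows are congruent mod n to a fixed vector (l_1,...,l_q), and suppose m > 1 is a common factor of n and of every l_j (so that (1/m)A is an integer matrix). Then the linear n-valued map f_{n,A}: T^q → D_n(T^q) has a partition into m submaps, each an (n/m)-valued map which differs from the linear (n/m)-valued map f_{n/m,(1/m)A} by translation by a constant vector (r/n)c for some r ∈ {0,1,...,m−1}; in particular each of the m submaps is homotopic (through (n/m)-valued maps) to f_{n/m,(1/m)A}. -/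
open Function Set

/-- The ordered configuration space of `n` points in `Y`. -/
def OrdConf (n : ℕ) (Y : Type*) [TopologicalSpace Y] : Type _ :=
  {y : Fin n → Y // Function.Injective y}

instance (n : ℕ) (Y : Type*) [TopologicalSpace Y] : TopologicalSpace (OrdConf n Y) :=
  instTopologicalSpaceSubtype

/-- Two ordered configurations are equivalent when they differ by a permutation. -/
def confSetoid (n : ℕ) (Y : Type*) [TopologicalSpace Y] : Setoid (OrdConf n Y) where
  r a b := ∃ σ : Equiv.Perm (Fin n), a.1 ∘ σ = b.1
  iseqv := by
    constructor
    · intro a; exact ⟨Equiv.refl _, rfl⟩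
    · rintro a b ⟨σ, h⟩
      refine ⟨σ.symm, funext fun i => ?_⟩
      have := congrFun h (σ.symm i)
      simpa using this.symm
    · rintro a b c ⟨σ, h1⟩ ⟨τ, h2⟩
      refine ⟨τ.trans σ, funext fun i => ?_⟩
      have h1' := congrFun h1 (τ i)
      have h2' := congrFun h2 i
      simp only [Function.comp_apply] at h1' h2' ⊢
      simp [Equiv.trans_apply, h1', h2']

/-- The unordered configuration space `D_n(Y)` of `n` points in `Y`,
with the quotient topology. -/
def UnordConf (n : ℕ) (Y : Type*) [TopologicalSpace Y] : Type _ :=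
  Quotient (confSetoid n Y)

instance (n : ℕ) (Y : Type*) [TopologicalSpace Y] : TopologicalSpace (UnordConf n Y) :=
  instTopologicalSpaceQuotient

/-- The underlying `n`-element subset of `Y` determined by an unordered configuration. -/
def UnordConf.values {n : ℕ} {Y : Type*} [TopologicalSpace Y] : UnordConf n Y → Set Y :=
  Quotient.lift (fun a => Set.range a.1) (by
    rintro a b ⟨σ, h⟩
    show Set.range a.1 = Set.range b.1
    rw [← h, Set.range_comp]
    simp)

/-- An `n`-valued map from `X` to `Y` is a continuous map `X → D_n(Y)`. -/
abbrev NValuedMap (X Y : Type*) [TopologicalSpace X] [TopologicalSpace Y] (n : ℕ) :=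
  C(X, UnordConf n Y)

/-- `g` is a submap of `f` when `g(x) ⊆ f(x)` for all `x`. -/
def IsSubmap {X Y : Type*} [TopologicalSpace X] [TopologicalSpace Y] {k n : ℕ}
    (g : NValuedMap X Y k) (f : NValuedMap X Y n) : Prop :=
  ∀ x : X, (g x).values ⊆ (f x).values

/-- An `n`-valued map is irreducible when it admits no proper (`k`-valued, `0 < k < n`) submap. -/
def IsIrreducibleNV {X Y : Type*} [TopologicalSpace X] [TopologicalSpace Y] {n : ℕ}
    (f : NValuedMap X Y n) : Prop :=
  ¬ ∃ (k : ℕ) (g : NValuedMap X Y k), 0 < k ∧ k < n ∧ IsSubmap g f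

/-- A partition of an `n`-valued map `f` into `l` multimaps:
a family of `kᵢ`-valued maps with `k₁ + ⋯ + k_l = n` whose values unite to those of `f`. -/
structure NVPartition {X Y : Type*} [TopologicalSpace X] [TopologicalSpace Y] {n : ℕ}
    (f : NValuedMap X Y n) (l : ℕ) where
  card : Fin l → ℕ
  card_pos : ∀ i, 0 < card i
  maps : ∀ i, NValuedMap X Y (card i)
  sum_card : ∑ i, card i = n
  values_eq : ∀ x : X, (f x).values = ⋃ i, UnordConf.values ((maps i) x)

/-- A partition is into irreducibles when every member is irreducible. -/
def NVPartition.IsIrreduciblePartition {X Y : Type*} [TopologicalSpace X] [TopologicalSpace Y]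
    {n : ℕ} {f : NValuedMap X Y n} {l : ℕ} (P : NVPartition f l) : Prop :=
  ∀ i, IsIrreducibleNV (P.maps i)

/-- A space is a (compact) finite polyhedron when it is homeomorphic to the underlying
space of a finite simplicial complex in some Euclidean space. -/
def IsFinitePolyhedron (X : Type*) [TopologicalSpace X] : Prop :=
  ∃ (N : ℕ) (K : Geometry.SimplicialComplex ℝ (EuclideanSpace ℝ (Fin N))),
    K.faces.Finite ∧ Nonempty (X ≃ₜ K.space)

/-- The `q`-torus `ℝ^q/ℤ^q`. -/
abbrev Torus (q : ℕ) := Fin q → AddCircle (1 : ℝ)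

/-- The universal covering projection `ℝ^q → T^q`, `t ↦ t mod 1`. -/
noncomputable def torusProj {q : ℕ} (t : Fin q → ℝ) : Torus q := fun i => (t i : AddCircle (1 : ℝ))

/-- The affine lift `f^k_{n,A}(t) = (1/n)(At + k·c)`, where `c = (1,…,1)`. -/
noncomputable def linLift {q : ℕ} (n : ℕ) (A : Matrix (Fin q) (Fin q) ℤ) (k : ℤ) (t : Fin q → ℝ) :
    Fin q → ℝ :=
  fun i => (1 / (n : ℝ)) * ((A.map (Int.cast : ℤ → ℝ)).mulVec t i + (k : ℝ))

/-- `f` is (a representative of) the linear `n`-valued torus map `f_{n,A}` induced by `A`: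
its value at `p^q(t)` is `{p^q(f^1_{n,A}(t)), …, p^q(f^n_{n,A}(t))}`. -/
def IsLinearNV {q : ℕ} (n : ℕ) (A : Matrix (Fin q) (Fin q) ℤ)
    (f : NValuedMap (Torus q) (Torus q) n) : Prop :=
  ∀ t : Fin q → ℝ,
    UnordConf.values (f (torusProj t)) =
      Set.range fun k : Fin n => torusProj (linLift n A ((k : ℕ) + 1) t)

/-- `f` has a proper partition: a partition into at least two multimaps. -/
def HasProperPartition {X Y : Type*} [TopologicalSpace X] [TopologicalSpace Y] {n : ℕ}
    (f : NValuedMap X Y n) : Prop :=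
  ∃ l : ℕ, 2 ≤ l ∧ Nonempty (NVPartition f l)


open Function Set

namespace St10

lemma addcircle_eq (x y : ℝ) :
    (x : AddCircle (1:ℝ)) = (y : AddCircle (1:ℝ)) ↔ ∃ k : ℤ, x - y = (k:ℝ) := by
  rw [show ((x : AddCircle (1:ℝ)) = y) ↔ x - y ∈ AddSubgroup.zmultiples (1:ℝ) from
    QuotientAddGroup.eq_iff_sub_mem]
  rw [AddSubgroup.mem_zmultiples_iff]
  constructor
  · rintro ⟨k, hk⟩; exact ⟨k, by simpa using hk.symm⟩
  · rintro ⟨k, hk⟩; exact ⟨k, by simpa using hk.symm⟩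

lemma rel_of_range_eq {Y : Type*} {n : ℕ} (a b : Fin n → Y) (ha : Injective a) (hb : Injective b)
    (h : Set.range a = Set.range b) : ∃ σ : Equiv.Perm (Fin n), a ∘ σ = b := by
  refine ⟨(Equiv.ofInjective b hb).trans ((Equiv.setCongr h.symm).trans
    (Equiv.ofInjective a ha).symm), funext fun i => ?_⟩
  simp only [Function.comp_apply, Equiv.trans_apply]
  rw [Equiv.apply_ofInjective_symm ha]
  rfl

lemma values_mk {Y : Type*} [TopologicalSpace Y] {n : ℕ} (a : OrdConf n Y) :
    UnordConf.values (Quotient.mk (confSetoid n Y) a) = Set.range a.1 := rfl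

lemma values_inj {Y : Type*} [TopologicalSpace Y] {n : ℕ} (u v : UnordConf n Y)
    (h : u.values = v.values) : u = v := by
  induction u using Quotient.ind
  induction v using Quotient.ind
  rename_i a b
  exact Quotient.sound (rel_of_range_eq a.1 b.1 a.2 b.2 h)

variable {q : ℕ}

lemma torusProj_surjective : Surjective (torusProj (q := q)) := by
  intro x
  refine ⟨fun i => (QuotientAddGroup.mk_surjective (x i)).choose, funext fun i => ?_⟩
  exact (QuotientAddGroup.mk_surjective (x i)).choose_spec

lemma torusProj_isOpenQuotientMap : IsOpenQuotientMap (torusProj (q := q)) :=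
  IsOpenQuotientMap.piMap (fun _ => QuotientAddGroup.isOpenQuotientMap_mk)

/-- The ordered configuration function: `s ↦ p^q(f^{s+1}_{n',A'}(t) + c·const)`. -/
noncomputable def cfgFun (n' : ℕ) (A' : Matrix (Fin q) (Fin q) ℤ) (c : ℝ) (t : Fin q → ℝ) :
    Fin n' → Torus q :=
  fun s a => ((linLift n' A' ((s : ℕ) + 1) t a + c : ℝ) : AddCircle (1:ℝ))

lemma linLift_sub {n' : ℕ} {A' : Matrix (Fin q) (Fin q) ℤ} (k k' : ℤ) (t : Fin q → ℝ) (a : Fin q) :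
    linLift n' A' k t a - linLift n' A' k' t a = ((k : ℝ) - (k' : ℝ)) / n' := by
  unfold linLift; ring

lemma cfgFun_injective (hq : 0 < q) (n' : ℕ) (A' : Matrix (Fin q) (Fin q) ℤ) (c : ℝ)
    (t : Fin q → ℝ) : Injective (cfgFun n' A' c t) := by
  intro s s' h
  have h0 := congrFun h ⟨0, hq⟩
  rw [show cfgFun n' A' c t s ⟨0, hq⟩ =
      ((linLift n' A' ((s : ℕ) + 1) t ⟨0, hq⟩ + c : ℝ) : AddCircle (1:ℝ)) from rfl] at h0
  rw [show cfgFun n' A' c t s' ⟨0, hq⟩ =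
      ((linLift n' A' ((s' : ℕ) + 1) t ⟨0, hq⟩ + c : ℝ) : AddCircle (1:ℝ)) from rfl] at h0
  obtain ⟨k, hk⟩ := (addcircle_eq _ _).mp h0
  have hn'0 : (0 : ℝ) < (n' : ℝ) := by exact_mod_cast s.pos
  have hd : linLift n' A' ((s : ℕ) + 1) t ⟨0, hq⟩ - linLift n' A' ((s' : ℕ) + 1) t ⟨0, hq⟩
      = (k : ℝ) := by linarith [hk]
  rw [linLift_sub (n' := n') (A' := A') ((s : ℕ) + 1) ((s' : ℕ) + 1) t ⟨0, hq⟩] at hd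
  have hreal : (((s : ℕ) : ℝ)) - ((s' : ℕ) : ℝ) = (k : ℝ) * (n' : ℝ) := by
    field_simp at hd
    push_cast at hd
    linarith [hd]
  have hint : ((s : ℕ) : ℤ) - ((s' : ℕ) : ℤ) = k * n' := by exact_mod_cast hreal
  have h1 : ((s : ℕ) : ℤ) < n' := by exact_mod_cast s.2
  have h2 : ((s' : ℕ) : ℤ) < n' := by exact_mod_cast s'.2
  have hk0 : k = 0 := by
    rcases lt_trichotomy k 0 with h' | h' | h'
    · nlinarith [hint, h1, h2]
    · exact h'
    · nlinarith [hint, h1, h2]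
  rw [hk0, zero_mul] at hint
  have : ((s : ℕ) : ℤ) = ((s' : ℕ) : ℤ) := by omega
  exact Fin.ext (by exact_mod_cast this)

end St10
namespace St10
variable {q : ℕ}

lemma mulVec_cast (A' : Matrix (Fin q) (Fin q) ℤ) (v : Fin q → ℤ) (a : Fin q) :
    (A'.map (Int.cast : ℤ → ℝ)).mulVec (fun j => (v j : ℝ)) a = ((A'.mulVec v a : ℤ) : ℝ) := by
  simp only [Matrix.mulVec, dotProduct, Matrix.map_apply]
  push_cast
  rfl

lemma mulVec_add_cast (A' : Matrix (Fin q) (Fin q) ℤ) (t : Fin q → ℝ) (v : Fin q → ℤ) (a : Fin q) :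
    (A'.map (Int.cast : ℤ → ℝ)).mulVec (fun j => t j + (v j : ℝ)) a =
      (A'.map (Int.cast : ℤ → ℝ)).mulVec t a + ((A'.mulVec v a : ℤ) : ℝ) := by
  rw [show (fun j => t j + (v j : ℝ)) = t + (fun j => (v j : ℝ)) from rfl,
    Matrix.mulVec_add, ← mulVec_cast A' v a]
  rfl

/-- cfgFun range is unchanged (as a set) when the lift `t` is changed by an integer vector. -/
lemma range_cfgFun_subset (n' : ℕ) (A' : Matrix (Fin q) (Fin q) ℤ) (l' : Fin q → ℤ)
    (hrow' : ∀ i j, (n' : ℤ) ∣ A' i j - l' j) (c : ℝ) (t t' : Fin q → ℝ)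
    (h : torusProj t = torusProj t') :
    Set.range (cfgFun n' A' c t') ⊆ Set.range (cfgFun n' A' c t) := by
  rcases Nat.eq_zero_or_pos n' with rfl | hn'
  · rintro y ⟨s, -⟩; exact absurd s.2 (by omega)
  have hv : ∀ a, ∃ k : ℤ, t' a - t a = (k : ℝ) := by
    intro a
    exact (addcircle_eq _ _).mp (congrFun h a).symm
  choose v hvv using hv
  have ht' : t' = fun j => t j + (v j : ℝ) := funext fun j => by linarith [hvv j]
  set D : ℤ := ∑ j, l' j * v j with hD
  rintro y ⟨s, rfl⟩
  -- target index
  have hmod : 0 ≤ ((s : ℕ) + D) % n' ∧ ((s : ℕ) + D) % n' < n' := by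
    constructor
    · exact Int.emod_nonneg _ (by exact_mod_cast hn'.ne')
    · exact Int.emod_lt_of_pos _ (by exact_mod_cast hn')
  refine ⟨⟨(((s : ℕ) + D) % n').toNat, by omega⟩, funext fun a => ?_⟩
  set s' : ℤ := (((s : ℕ) + D) % n') with hs'
  have hs'cast : ((((((s : ℕ) + D) % n').toNat : ℕ)) : ℤ) = s' := Int.toNat_of_nonneg hmod.1
  -- divisibility
  have hdvd1 : (n' : ℤ) ∣ A'.mulVec v a - D := by
    rw [hD, Matrix.mulVec, dotProduct, ← Finset.sum_sub_distrib]
    exact Finset.dvd_sum fun j _ => by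
      rw [← sub_mul]; exact Dvd.dvd.mul_right (hrow' a j) _
  have hdvd2 : (n' : ℤ) ∣ s' - ((s : ℕ) + D) := by
    rw [hs', Int.emod_def]
    exact ⟨-((((s : ℕ) + D)) / n'), by ring⟩
  have hdvd : (n' : ℤ) ∣ s' - (s : ℕ) - A'.mulVec v a := by
    have : s' - (s : ℕ) - A'.mulVec v a = (s' - ((s : ℕ) + D)) - (A'.mulVec v a - D) := by ring
    rw [this]; exact dvd_sub hdvd2 hdvd1
  obtain ⟨k, hk⟩ := hdvd
  show ((linLift n' A' _ t a + c : ℝ) : AddCircle (1:ℝ)) = ((linLift n' A' _ t' a + c : ℝ) : AddCircle (1:ℝ))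
  rw [addcircle_eq]
  refine ⟨k, ?_⟩
  have hn'R : ((n' : ℝ)) ≠ 0 := by exact_mod_cast hn'.ne'
  unfold linLift
  rw [ht', mulVec_add_cast]
  have hcast : ((s' : ℤ) : ℝ) - ((s : ℕ) : ℝ) - ((A'.mulVec v a : ℤ) : ℝ)
      = (n' : ℝ) * (k : ℝ) := by exact_mod_cast hk
  have hexp : (1 / (n' : ℝ)) * ((n' : ℝ) * (k : ℝ)) = (k : ℝ) := by field_simp
  have hX : ((((((s : ℕ) + D) % n').toNat : ℕ)) : ℝ) = (s' : ℝ) := by exact_mod_cast hs'cast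
  push_cast [Int.toNat_of_nonneg hmod.1]
  push_cast at hcast
  linear_combination (1 / (n' : ℝ)) * hcast + hexp + (1 / (n' : ℝ)) * hX

lemma range_cfgFun_eq (n' : ℕ) (A' : Matrix (Fin q) (Fin q) ℤ) (l' : Fin q → ℤ)
    (hrow' : ∀ i j, (n' : ℤ) ∣ A' i j - l' j) (c : ℝ) (t t' : Fin q → ℝ)
    (h : torusProj t = torusProj t') :
    Set.range (cfgFun n' A' c t) = Set.range (cfgFun n' A' c t') :=
  Set.Subset.antisymm (range_cfgFun_subset n' A' l' hrow' c t' t h.symm)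
    (range_cfgFun_subset n' A' l' hrow' c t t' h)

end St10
namespace St10
variable {q : ℕ}

noncomputable def cfg (hq : 0 < q) (n' : ℕ) (A' : Matrix (Fin q) (Fin q) ℤ) (c : ℝ)
    (t : Fin q → ℝ) : OrdConf n' (Torus q) :=
  ⟨cfgFun n' A' c t, cfgFun_injective hq n' A' c t⟩

lemma mk_cfg_eq (hq : 0 < q) (n' : ℕ) (A' : Matrix (Fin q) (Fin q) ℤ) (l' : Fin q → ℤ)
    (hrow' : ∀ i j, (n' : ℤ) ∣ A' i j - l' j) (c : ℝ) (t t' : Fin q → ℝ)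
    (h : torusProj t = torusProj t') :
    (Quotient.mk (confSetoid n' (Torus q)) (cfg hq n' A' c t) : UnordConf n' (Torus q)) =
      Quotient.mk (confSetoid n' (Torus q)) (cfg hq n' A' c t') :=
  Quotient.sound (rel_of_range_eq _ _ (cfg hq n' A' c t).2 (cfg hq n' A' c t').2
    (range_cfgFun_eq n' A' l' hrow' c t t' h))

noncomputable def Gfun (hq : 0 < q) (n' : ℕ) (A' : Matrix (Fin q) (Fin q) ℤ) :
    ℝ × Torus q → UnordConf n' (Torus q) :=
  fun p => Quotient.mk (confSetoid n' (Torus q))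
    (cfg hq n' A' p.1 (surjInv torusProj_surjective p.2))

lemma Gfun_proj (hq : 0 < q) (n' : ℕ) (A' : Matrix (Fin q) (Fin q) ℤ) (l' : Fin q → ℤ)
    (hrow' : ∀ i j, (n' : ℤ) ∣ A' i j - l' j) (c : ℝ) (t : Fin q → ℝ) :
    Gfun hq n' A' (c, torusProj t) = Quotient.mk (confSetoid n' (Torus q)) (cfg hq n' A' c t) :=
  mk_cfg_eq hq n' A' l' hrow' c _ t (surjInv_eq torusProj_surjective _)

lemma values_Gfun (hq : 0 < q) (n' : ℕ) (A' : Matrix (Fin q) (Fin q) ℤ) (l' : Fin q → ℤ)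
    (hrow' : ∀ i j, (n' : ℤ) ∣ A' i j - l' j) (c : ℝ) (t : Fin q → ℝ) :
    UnordConf.values (Gfun hq n' A' (c, torusProj t)) = Set.range (cfgFun n' A' c t) := by
  rw [Gfun_proj hq n' A' l' hrow' c t]; rfl

lemma continuous_Gfun (hq : 0 < q) (n' : ℕ) (A' : Matrix (Fin q) (Fin q) ℤ) (l' : Fin q → ℤ)
    (hrow' : ∀ i j, (n' : ℤ) ∣ A' i j - l' j) :
    Continuous (Gfun hq n' A' (q := q)) := by
  have hOQ : IsOpenQuotientMap (Prod.map (id : ℝ → ℝ) (torusProj (q := q))) :=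
    IsOpenQuotientMap.id.prodMap torusProj_isOpenQuotientMap
  rw [← hOQ.continuous_comp_iff]
  have heq : (Gfun hq n' A') ∘ (Prod.map (id : ℝ → ℝ) (torusProj (q := q))) =
      fun p : ℝ × (Fin q → ℝ) =>
        Quotient.mk (confSetoid n' (Torus q)) (cfg hq n' A' p.1 p.2) := by
    funext p
    exact Gfun_proj hq n' A' l' hrow' p.1 p.2
  rw [heq]
  apply Continuous.comp
  · exact continuous_quot_mk
  · apply Continuous.subtype_mk
    apply continuous_pi; intro s
    apply continuous_pi; intro a
    apply Continuous.comp (Y := ℝ)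
    · exact continuous_quot_mk
    · show Continuous fun p : ℝ × (Fin q → ℝ) =>
        (1 / (n' : ℝ)) * ((A'.map (Int.cast : ℤ → ℝ)).mulVec p.2 a + (((s : ℕ) : ℤ) + 1 : ℤ)) + p.1
      have hsum : Continuous fun p : ℝ × (Fin q → ℝ) =>
          (A'.map (Int.cast : ℤ → ℝ)).mulVec p.2 a := by
        simp only [Matrix.mulVec, dotProduct]
        exact continuous_finset_sum _ fun j _ =>
          continuous_const.mul ((continuous_apply j).comp continuous_snd)
      exact (continuous_const.mul (hsum.add continuous_const)).add continuous_fst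

end St10
namespace St10
variable {q : ℕ}

lemma mulVec_smul_cast (m : ℕ) (A A' : Matrix (Fin q) (Fin q) ℤ)
    (hAA' : ∀ i j, A i j = m * A' i j) (t : Fin q → ℝ) (a : Fin q) :
    (A.map (Int.cast : ℤ → ℝ)).mulVec t a =
      (m : ℝ) * (A'.map (Int.cast : ℤ → ℝ)).mulVec t a := by
  simp only [Matrix.mulVec, dotProduct, Matrix.map_apply, Finset.mul_sum]
  refine Finset.sum_congr rfl fun j _ => ?_
  rw [hAA' a j]
  push_cast
  ring

lemma point_diff (n m n' : ℕ) (hm : 0 < m) (hn' : 0 < n') (hnm : n = m * n')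
    (A A' : Matrix (Fin q) (Fin q) ℤ) (hAA' : ∀ i j, A i j = m * A' i j)
    (K S : ℤ) (i : ℕ) (t : Fin q → ℝ) (a : Fin q) :
    linLift n A K t a - (linLift n' A' S t a + ((i : ℕ) : ℝ) / n) =
      ((K : ℝ) - ((m : ℝ) * (S : ℝ) + (i : ℝ))) / n := by
  have hnR : ((n : ℕ) : ℝ) = (m : ℝ) * (n' : ℝ) := by rw [hnm]; push_cast; ring
  have hmR : ((m : ℕ) : ℝ) ≠ 0 := by exact_mod_cast hm.ne'
  have hn'R : ((n' : ℕ) : ℝ) ≠ 0 := by exact_mod_cast hn'.ne'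
  unfold linLift
  rw [mulVec_smul_cast m A A' hAA' t a, hnR]
  field_simp
  ring

lemma point_eq (n m n' : ℕ) (hm : 0 < m) (hn : 0 < n) (hn' : 0 < n') (hnm : n = m * n')
    (A A' : Matrix (Fin q) (Fin q) ℤ) (hAA' : ∀ i j, A i j = m * A' i j)
    (K S : ℤ) (i : ℕ) (z : ℤ) (hcond : K - ((m : ℤ) * S + (i : ℕ)) = (n : ℤ) * z)
    (t : Fin q → ℝ) :
    torusProj (linLift n A K t) =
      fun a => ((linLift n' A' S t a + ((i : ℕ) : ℝ) / n : ℝ) : AddCircle (1 : ℝ)) := by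
  funext a
  show ((linLift n A K t a : ℝ) : AddCircle (1 : ℝ)) = _
  rw [addcircle_eq]
  refine ⟨z, ?_⟩
  rw [point_diff n m n' hm hn' hnm A A' hAA' K S i t a]
  have hnR : ((n : ℕ) : ℝ) ≠ 0 := by exact_mod_cast hn.ne'
  have hc : (K : ℝ) - ((m : ℝ) * (S : ℝ) + (i : ℝ)) = (n : ℝ) * (z : ℝ) := by
    exact_mod_cast hcond
  rw [hc]
  field_simp

lemma range_union (n m n' : ℕ) (hm : 0 < m) (hn : 0 < n) (hn' : 0 < n') (hnm : n = m * n')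
    (A A' : Matrix (Fin q) (Fin q) ℤ) (hAA' : ∀ i j, A i j = m * A' i j) (t : Fin q → ℝ) :
    (Set.range fun k : Fin n => torusProj (linLift n A ((k : ℕ) + 1) t)) =
      ⋃ i : Fin m, Set.range (cfgFun n' A' (((i : ℕ) : ℝ) / n) t) := by
  have hmn : m ≤ n := by
    rw [hnm]; exact Nat.le_mul_of_pos_right m hn'
  ext y
  simp only [Set.mem_range, Set.mem_iUnion]
  constructor
  · rintro ⟨k, rfl⟩
    have hkn : (k : ℕ) < n := k.2
    -- choose w ∈ [0, n) with k+1 ≡ w + m  (mod n)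
    obtain ⟨w, hwlt, z, hz⟩ : ∃ w, w < n ∧ ∃ z : ℤ,
        ((k : ℕ) : ℤ) + 1 - ((w : ℤ) + m) = (n : ℤ) * z := by
      by_cases hK : m ≤ (k : ℕ) + 1
      · exact ⟨(k : ℕ) + 1 - m, by omega, 0, by push_cast; omega⟩
      · exact ⟨(k : ℕ) + 1 + n - m, by omega, -1, by push_cast; omega⟩
    have hdm := Nat.div_add_mod w m
    have hslt : w / m < n' := by
      rw [Nat.div_lt_iff_lt_mul hm]
      have : n' * m = n := by rw [hnm, Nat.mul_comm]
      omega
    have hu : m * (w / m + 1) + w % m = w + m := by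
      have h2 : m * (w / m + 1) + w % m = m * (w / m) + w % m + m := by ring
      omega
    refine ⟨⟨w % m, Nat.mod_lt _ hm⟩, ⟨w / m, hslt⟩, ?_⟩
    refine (point_eq n m n' hm hn hn' hnm A A' hAA' (((k : ℕ) : ℤ) + 1)
      (((w / m : ℕ) : ℤ) + 1) (w % m) z ?_ t).symm
    have huZ : (m : ℤ) * (((w / m : ℕ) : ℤ) + 1) + ((w % m : ℕ) : ℤ) = ((w : ℕ) : ℤ) + m := by
      exact_mod_cast hu
    rw [huZ]
    exact hz
  · rintro ⟨i, s, rfl⟩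
    have hslt : (s : ℕ) + 1 ≤ n' := s.2
    have hub : m * ((s : ℕ) + 1) + (i : ℕ) < n + m := by
      have h2 : m * ((s : ℕ) + 1) ≤ m * n' := Nat.mul_le_mul_left m hslt
      have h3 : (i : ℕ) < m := i.2
      omega
    have hlb : m ≤ m * ((s : ℕ) + 1) + (i : ℕ) := by
      have : m * 1 ≤ m * ((s : ℕ) + 1) := Nat.mul_le_mul_left m (by omega)
      omega
    obtain ⟨u, hu⟩ : ∃ u, u = m * ((s : ℕ) + 1) + (i : ℕ) := ⟨_, rfl⟩
    rw [← hu] at hub hlb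
    have huZ : (m : ℤ) * (((s : ℕ) : ℤ) + 1) + ((i : ℕ) : ℤ) = (u : ℤ) := by
      exact_mod_cast hu.symm
    by_cases hc : u ≤ n
    · refine ⟨⟨u - 1, by omega⟩, (point_eq n m n' hm hn hn' hnm A A' hAA'
        (((u - 1 : ℕ) : ℤ) + 1) (((s : ℕ) : ℤ) + 1) (i : ℕ) 0 ?_ t)⟩
      rw [huZ]; omega
    · refine ⟨⟨u - n - 1, by omega⟩, (point_eq n m n' hm hn hn' hnm A A' hAA'
        (((u - n - 1 : ℕ) : ℤ) + 1) (((s : ℕ) : ℤ) + 1) (i : ℕ) (-1) ?_ t)⟩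
      rw [huZ]; omega

end St10

open St10

theorem statement_10 {q n : ℕ} (hn : 0 < n) (A : Matrix (Fin q) (Fin q) ℤ) (l : Fin q → ℤ)
    (hrow : ∀ i j, A i j ≡ l j [ZMOD (n : ℤ)])
    (m : ℕ) (hm : 1 < m) (hmn : m ∣ n) (hml : ∀ j, (m : ℤ) ∣ l j)
    (f : NValuedMap (Torus q) (Torus q) n) (hf : IsLinearNV n A f) :
    ∃ g : Fin m → NValuedMap (Torus q) (Torus q) (n / m),
      (∀ x : Torus q, UnordConf.values (f x) = ⋃ i, UnordConf.values (g i x)) ∧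
      ∀ i : Fin m, ∃ r : ℕ, r < m ∧
        (∀ t : Fin q → ℝ,
          UnordConf.values (g i (torusProj t)) =
            Set.range fun s : Fin (n / m) =>
              torusProj fun a =>
                linLift (n / m) (Matrix.of fun i' j' => A i' j' / (m : ℤ)) ((s : ℕ) + 1) t a
                  + (r : ℝ) / (n : ℝ)) ∧
        ∀ f' : NValuedMap (Torus q) (Torus q) (n / m),
          IsLinearNV (n / m) (Matrix.of fun i' j' => A i' j' / (m : ℤ)) f' →
            (g i).Homotopic f' := by
  classical
  rcases Nat.eq_zero_or_pos q with hq0 | hq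
  · exfalso
    have hn2 : 2 ≤ n := le_trans hm (Nat.le_of_dvd hn hmn)
    obtain ⟨a, -⟩ := Quotient.exists_rep (f (torusProj fun _ => 0))
    have h01 : a.1 ⟨0, by omega⟩ = a.1 ⟨1, by omega⟩ := by
      subst hq0
      funext i
      exact absurd i.2 (by omega)
    have := a.2 h01
    simp [Fin.ext_iff] at this
  have hm0 : 0 < m := by omega
  have hnm : n = m * (n / m) := (Nat.mul_div_cancel' hmn).symm
  have hn' : 0 < n / m := by
    rcases Nat.eq_zero_or_pos (n / m) with h | h
    · rw [h, Nat.mul_zero] at hnm; omega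
    · exact h
  have hAm : ∀ i j, (m : ℤ) ∣ A i j := by
    intro i j
    have hd : (n : ℤ) ∣ l j - A i j := (hrow i j).dvd
    have hmd : (m : ℤ) ∣ (n : ℤ) := by exact_mod_cast hmn
    have h1 : (m : ℤ) ∣ l j - A i j := dvd_trans hmd hd
    have h2 : A i j = l j - (l j - A i j) := by ring
    rw [h2]
    exact dvd_sub (hml j) h1
  set A' : Matrix (Fin q) (Fin q) ℤ := Matrix.of fun i' j' => A i' j' / (m : ℤ) with hA'
  have hAA' : ∀ i j, A i j = m * A' i j := fun i j => (Int.mul_ediv_cancel' (hAm i j)).symm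
  set l' : Fin q → ℤ := fun j => l j / m with hl'
  have hll' : ∀ j, l j = m * l' j := fun j => (Int.mul_ediv_cancel' (hml j)).symm
  have hrow' : ∀ i j, ((n / m : ℕ) : ℤ) ∣ A' i j - l' j := by
    intro i j
    have hd : (n : ℤ) ∣ l j - A i j := (hrow i j).dvd
    obtain ⟨z, hz⟩ := hd
    refine ⟨-z, ?_⟩
    have hmZ : (m : ℤ) ≠ 0 := by exact_mod_cast hm0.ne'
    apply mul_left_cancel₀ hmZ
    have hnZ : (n : ℤ) = (m : ℤ) * ((n / m : ℕ) : ℤ) := by exact_mod_cast hnm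
    calc (m : ℤ) * (A' i j - l' j) = A i j - l j := by rw [mul_sub, ← hAA', ← hll']
      _ = -(l j - A i j) := by ring
      _ = -((n : ℤ) * z) := by rw [hz]
      _ = (m : ℤ) * (((n / m : ℕ) : ℤ) * -z) := by rw [hnZ]; ring
  have Gcont := continuous_Gfun hq (n / m) A' l' hrow'
  set g : Fin m → NValuedMap (Torus q) (Torus q) (n / m) := fun i =>
    ⟨fun x => Gfun hq (n / m) A' (((i : ℕ) : ℝ) / (n : ℝ), x),
      Gcont.comp (continuous_const.prodMk continuous_id)⟩ with hg
  refine ⟨g, ?_, ?_⟩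
  · intro x
    obtain ⟨t, rfl⟩ := torusProj_surjective x
    rw [hf t]
    rw [range_union n m (n / m) hm0 hn hn' hnm A A' hAA' t]
    refine Set.iUnion_congr fun i => ?_
    exact (values_Gfun hq (n / m) A' l' hrow' (((i : ℕ) : ℝ) / (n : ℝ)) t).symm
  · intro i
    refine ⟨(i : ℕ), i.2, ?_, ?_⟩
    · intro t
      exact values_Gfun hq (n / m) A' l' hrow' (((i : ℕ) : ℝ) / (n : ℝ)) t
    · intro f' hf'
      have hfg : ∀ x, f' x = Gfun hq (n / m) A' (0, x) := by
        intro x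
        obtain ⟨t, rfl⟩ := torusProj_surjective x
        apply values_inj
        rw [hf' t, values_Gfun hq (n / m) A' l' hrow' 0 t]
        refine congrArg Set.range (funext fun s => funext fun a => ?_)
        show ((linLift (n / m) A' ((s : ℕ) + 1) t a : ℝ) : AddCircle (1 : ℝ)) = _
        norm_num [cfgFun]
      let Hmap : C(unitInterval × Torus q, UnordConf (n / m) (Torus q)) :=
        ⟨fun p => Gfun hq (n / m) A' ((1 - (p.1 : ℝ)) * (((i : ℕ) : ℝ) / (n : ℝ)), p.2),
          Gcont.comp (((continuous_const.sub
            (continuous_subtype_val.comp continuous_fst)).mul continuous_const).prodMk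
            continuous_snd)⟩
      refine ⟨{ toContinuousMap := Hmap,
                map_zero_left := fun x => by norm_num [Hmap, hg],
                map_one_left := fun x => by norm_num [Hmap, hfg x] }⟩
end

section
/- Let A be a q×q integer matrix all of whose rows are congruent mod n to a fixed vector (l_1,...,l_q). Then the linear n-valued map f_{n,A}: T^q → D_n(T^q) splits (i.e., admits a partition into n single-valued continuous maps) if and only if n divides every l_j, and in that case f_{n,A} splits into n single-valued maps, each homotopic to the single-valued linear map f_{1,(1/n)A} induced by the integer matrix (1/n)A. -/
open Function Set

section Aux

open scoped unitInterval

noncomputable section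

lemma torusProj_continuous {q : ℕ} : Continuous (torusProj (q := q)) :=
  continuous_pi fun i => (AddCircle.continuous_mk' (1:ℝ)).comp (continuous_apply i)

lemma torusProj_surjective {q : ℕ} : Function.Surjective (torusProj (q := q)) := by
  intro x
  choose t ht using fun i => QuotientAddGroup.mk_surjective (x i)
  exact ⟨t, funext fun i => ht i⟩

/-- The single-valued linear torus map induced by an integer matrix. -/
def torusLin {q : ℕ} (B : Matrix (Fin q) (Fin q) ℤ) (x : Torus q) : Torus q :=
  fun i => ∑ m, B i m • x m

lemma torusLin_continuous {q : ℕ} (B : Matrix (Fin q) (Fin q) ℤ) : Continuous (torusLin B) := by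
  refine continuous_pi fun i => continuous_finset_sum _ fun m _ => ?_
  exact (continuous_apply m).zsmul (B i m)

lemma torusLin_proj {q : ℕ} (B : Matrix (Fin q) (Fin q) ℤ) (t : Fin q → ℝ) :
    torusLin B (torusProj t) = torusProj fun i => ∑ m, (B i m : ℝ) * t m := by
  funext i
  show ∑ m, B i m • ((t m : ℝ) : AddCircle (1:ℝ)) = _
  have h : ∀ m, B i m • ((t m : ℝ) : AddCircle (1:ℝ))
      = (((B i m : ℝ) * t m : ℝ) : AddCircle (1:ℝ)) := fun m => by
    rw [← QuotientAddGroup.mk_zsmul, zsmul_eq_mul]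
  rw [Finset.sum_congr rfl fun m _ => h m]
  show _ = QuotientAddGroup.mk _
  rw [← QuotientAddGroup.mk_sum]

/-- A continuous map from `ℝ` to the circle with finitely many values is constant. -/
lemma aux_const {u : ℝ → AddCircle (1:ℝ)} (hu : Continuous u) {S : Set (AddCircle (1:ℝ))}
    (hS : S.Finite) (hrange : ∀ s, u s ∈ S) (a b : ℝ) : u a = u b := by
  have hclosed : IsClosed (u ⁻¹' {u a}) := isClosed_singleton.preimage hu
  have hopen : IsOpen (u ⁻¹' {u a}) := by
    have h2 : IsClosed (S \ {u a}) := (hS.subset diff_subset).isClosed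
    have heq : u ⁻¹' {u a} = (u ⁻¹' (S \ {u a}))ᶜ := by
      ext s
      simp only [mem_preimage, mem_singleton_iff, mem_compl_iff, mem_diff, not_and, not_not]
      exact ⟨fun h _ => h, fun h => h (hrange s)⟩
    rw [heq]
    exact (h2.preimage hu).isOpen_compl
  rcases isClopen_iff.mp ⟨hclosed, hopen⟩ with h | h
  · have ha : a ∈ u ⁻¹' {u a} := rfl
    rw [h] at ha
    exact ha.elim
  · have hb : b ∈ u ⁻¹' {u a} := h ▸ mem_univ b
    exact (mem_singleton_iff.mp hb).symm

end

end Aux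

theorem statement_11 {q n : ℕ} (hn : 0 < n) (A : Matrix (Fin q) (Fin q) ℤ) (l : Fin q → ℤ)
    (hrow : ∀ i j, A i j ≡ l j [ZMOD (n : ℤ)])
    (f : NValuedMap (Torus q) (Torus q) n) (hf : IsLinearNV n A f) :
    ((∃ g : Fin n → C(Torus q, Torus q),
        ∀ x : Torus q, UnordConf.values (f x) = Set.range fun i => g i x) ↔
      ∀ j, (n : ℤ) ∣ l j) ∧
    ((∀ j, (n : ℤ) ∣ l j) →
      ∃ g : Fin n → C(Torus q, Torus q),
        (∀ x : Torus q, UnordConf.values (f x) = Set.range fun i => g i x) ∧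
        ∀ (i : Fin n) (φ : C(Torus q, Torus q)),
          (∀ t : Fin q → ℝ,
            φ (torusProj t) =
              torusProj (linLift 1 (Matrix.of fun a b => A a b / (n : ℤ)) 1 t)) →
          (g i).Homotopic φ) := by
  classical
  have hn' : (n : ℝ) ≠ 0 := Nat.cast_ne_zero.mpr hn.ne'
  -- Forward direction: splitting implies divisibility.
  have fwd : (∃ g : Fin n → C(Torus q, Torus q),
      ∀ x : Torus q, UnordConf.values (f x) = Set.range fun i => g i x) →
      ∀ j, (n : ℤ) ∣ l j := by
    rintro ⟨g, hg⟩ j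
    set g0 : C(Torus q, Torus q) := g ⟨0, hn⟩ with hg0
    set t : ℝ → (Fin q → ℝ) := fun s m => if m = j then s else 0 with ht
    set u : ℝ → AddCircle (1:ℝ) :=
      fun s => g0 (torusProj (t s)) j - ((s * (A j j : ℝ) / (n:ℝ) : ℝ) : AddCircle (1:ℝ)) with hud
    have hmulVec : ∀ s, (A.map (Int.cast : ℤ → ℝ)).mulVec (t s) j = (A j j : ℝ) * s := by
      intro s
      simp only [Matrix.mulVec, dotProduct, Matrix.map_apply, ht]
      rw [Finset.sum_eq_single j]
      · simp
      · intro m _ hm; simp [hm]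
      · simp
    have hmem : ∀ s, u s ∈ Set.range
        (fun k : Fin n => (((((k:ℕ):ℝ) + 1) / (n:ℝ) : ℝ) : AddCircle (1:ℝ))) := by
      intro s
      have h1 : g0 (torusProj (t s)) ∈ UnordConf.values (f (torusProj (t s))) := by
        rw [hg]; exact Set.mem_range_self _
      rw [hf (t s)] at h1
      obtain ⟨k, hk⟩ := h1
      refine ⟨k, ?_⟩
      have hks : g0 (torusProj (t s)) j
          = ((linLift n A ((k:ℕ)+1) (t s) j : ℝ) : AddCircle (1:ℝ)) := by
        rw [← hk]; rfl
      show (((((k:ℕ):ℝ) + 1) / (n:ℝ) : ℝ) : AddCircle (1:ℝ))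
          = g0 (torusProj (t s)) j - ((s * (A j j : ℝ) / (n:ℝ) : ℝ) : AddCircle (1:ℝ))
      rw [hks]
      show _ = QuotientAddGroup.mk _ - QuotientAddGroup.mk _
      rw [← QuotientAddGroup.mk_sub]
      show QuotientAddGroup.mk _ = _
      congr 1
      rw [linLift, hmulVec s]
      push_cast
      field_simp
      ring
    have hu : Continuous u := by
      have hts : Continuous fun s => torusProj (t s) := by
        refine torusProj_continuous.comp (continuous_pi fun m => ?_)
        by_cases hm : m = j
        · simpa [ht, hm] using continuous_id'
        · simpa [ht, hm] using continuous_const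
      refine Continuous.sub ?_ ?_
      · exact (continuous_apply j).comp (g0.continuous.comp hts)
      · exact (AddCircle.continuous_mk' (1:ℝ)).comp (by fun_prop)
    have h01 : u 0 = u 1 := aux_const hu (Set.finite_range _) hmem 0 1
    have hP : torusProj (t 1) = torusProj (t 0) := by
      funext m
      by_cases hm : m = j
      · subst hm
        show ((if m = m then (1:ℝ) else 0 : ℝ) : AddCircle (1:ℝ))
            = ((if m = m then (0:ℝ) else 0 : ℝ) : AddCircle (1:ℝ))
        rw [if_pos rfl, if_pos rfl]
        rw [show ((1:ℝ) : AddCircle (1:ℝ)) = 0 from AddCircle.coe_period 1]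
        exact (QuotientAddGroup.mk_zero _).symm
      · show ((if m = j then (1:ℝ) else 0 : ℝ) : AddCircle (1:ℝ))
            = ((if m = j then (0:ℝ) else 0 : ℝ) : AddCircle (1:ℝ))
        rw [if_neg hm, if_neg hm]
    have e0 : u 0 = g0 (torusProj (t 0)) j := by
      show g0 (torusProj (t 0)) j - ((0 * (A j j : ℝ) / (n:ℝ) : ℝ) : AddCircle (1:ℝ)) = _
      rw [zero_mul, zero_div, QuotientAddGroup.mk_zero, sub_zero]
    have e1 : u 1 = g0 (torusProj (t 0)) j - (((A j j : ℝ) / (n:ℝ) : ℝ) : AddCircle (1:ℝ)) := by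
      show g0 (torusProj (t 1)) j - ((1 * (A j j : ℝ) / (n:ℝ) : ℝ) : AddCircle (1:ℝ)) = _
      rw [hP, one_mul]
    have hz : (((A j j : ℝ) / (n:ℝ) : ℝ) : AddCircle (1:ℝ)) = 0 := by
      rw [e0, e1] at h01
      exact sub_eq_self.mp h01.symm
    obtain ⟨z, hzz⟩ := (AddCircle.coe_eq_zero_iff (1:ℝ)).mp hz
    rw [zsmul_eq_mul, mul_one, eq_div_iff hn'] at hzz
    have hdA : (n:ℤ) ∣ A j j := ⟨z, by exact_mod_cast hzz.symm.trans (mul_comm _ _)⟩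
    have hlm := (hrow j j).dvd
    have hlf : l j = (l j - A j j) + A j j := by ring
    rw [hlf]
    exact dvd_add hlm hdA
  -- The construction under divisibility.
  have construction : (∀ j, (n : ℤ) ∣ l j) →
      ∃ g : Fin n → C(Torus q, Torus q),
        (∀ x : Torus q, UnordConf.values (f x) = Set.range fun i => g i x) ∧
        ∀ (i : Fin n) (φ : C(Torus q, Torus q)),
          (∀ t : Fin q → ℝ,
            φ (torusProj t) =
              torusProj (linLift 1 (Matrix.of fun a b => A a b / (n : ℤ)) 1 t)) →
          (g i).Homotopic φ := by
    intro hl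
    have hAd : ∀ i m, (n:ℤ) ∣ A i m := by
      intro i m
      have h1 : (n:ℤ) ∣ l m - A i m := (hrow i m).dvd
      have h2 : A i m = l m - (l m - A i m) := by ring
      rw [h2]
      exact dvd_sub (hl m) h1
    set B : Matrix (Fin q) (Fin q) ℤ := Matrix.of fun a b => A a b / (n : ℤ) with hBdef
    have hB : ∀ i m, (n:ℤ) * B i m = A i m := fun i m => Int.mul_ediv_cancel' (hAd i m)
    set g : Fin n → C(Torus q, Torus q) := fun k =>
      ⟨fun x i => (((((k:ℕ):ℝ) + 1) / (n:ℝ) : ℝ) : AddCircle (1:ℝ)) + torusLin B x i, by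
        refine continuous_pi fun i => Continuous.add (f := fun _ => (((((k:ℕ):ℝ) + 1) / (n:ℝ) : ℝ) : AddCircle (1:ℝ))) (g := fun x => torusLin B x i) continuous_const ?_
        exact (continuous_apply i).comp (torusLin_continuous B)⟩ with hgdef
    have hsum : ∀ (i : Fin q) (t : Fin q → ℝ),
        (A.map (Int.cast : ℤ → ℝ)).mulVec t i = (n:ℝ) * ∑ m, (B i m : ℝ) * t m := by
      intro i t
      simp only [Matrix.mulVec, dotProduct, Matrix.map_apply, Finset.mul_sum]
      refine Finset.sum_congr rfl fun m _ => ?_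
      have : (A i m : ℝ) = (n:ℝ) * (B i m : ℝ) := by exact_mod_cast (hB i m).symm
      rw [this]; ring
    have gproj : ∀ (k : Fin n) (t : Fin q → ℝ),
        g k (torusProj t) = torusProj (linLift n A ((k:ℕ) + 1) t) := by
      intro k t
      funext i
      show _ + torusLin B (torusProj t) i = _
      rw [torusLin_proj]
      show _ + QuotientAddGroup.mk _ = QuotientAddGroup.mk _
      rw [← QuotientAddGroup.mk_add]
      congr 1
      rw [linLift, hsum i t]
      push_cast
      field_simp
      ring
    have hvals : ∀ x : Torus q, UnordConf.values (f x) = Set.range fun i => g i x := by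
      intro x
      obtain ⟨t, rfl⟩ := torusProj_surjective x
      rw [hf t]
      have he : (fun k : Fin n => torusProj (linLift n A ((k:ℕ) + 1) t))
          = fun i : Fin n => g i (torusProj t) := funext fun k => (gproj k t).symm
      rw [he]
    refine ⟨g, hvals, ?_⟩
    intro i φ hφ
    have hφ' : ∀ x, φ x = torusLin B x := by
      intro x
      obtain ⟨t, rfl⟩ := torusProj_surjective x
      rw [hφ t, torusLin_proj]
      funext i0
      show QuotientAddGroup.mk _ = QuotientAddGroup.mk _
      rw [linLift]
      have hmv : (B.map (Int.cast : ℤ → ℝ)).mulVec t i0 = ∑ m, (B i0 m : ℝ) * t m := by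
        simp [Matrix.mulVec, dotProduct, Matrix.map_apply]
      have : (1 / ((1:ℕ) : ℝ)) * ((B.map (Int.cast : ℤ → ℝ)).mulVec t i0 + ((1:ℤ) : ℝ))
          = (∑ m, (B i0 m : ℝ) * t m) + 1 := by
        rw [hmv]; push_cast; ring
      rw [this]
      rw [QuotientAddGroup.mk_add]
      have h1 : (((1:ℝ)) : AddCircle (1:ℝ)) = 0 := AddCircle.coe_period 1
      rw [h1, add_zero]
    refine ⟨ContinuousMap.Homotopy.symm ?_⟩
    refine
      { toFun := fun p => fun i0 =>
          ((((p.1 : ℝ)) * ((((i:ℕ):ℝ) + 1) / (n:ℝ)) : ℝ) : AddCircle (1:ℝ)) + torusLin B p.2 i0,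
        continuous_toFun := by
          refine continuous_pi fun i0 => Continuous.add (f := fun p : unitInterval × Torus q => ((((p.1 : ℝ)) * ((((i:ℕ):ℝ) + 1) / (n:ℝ)) : ℝ) : AddCircle (1:ℝ))) (g := fun p : unitInterval × Torus q => torusLin B p.2 i0) ?_ ?_
          · exact (AddCircle.continuous_mk' (1:ℝ)).comp
              ((continuous_subtype_val.comp continuous_fst).mul continuous_const)
          · exact (continuous_apply i0).comp ((torusLin_continuous B).comp continuous_snd)
        map_zero_left := by
          intro x
          funext i0
          simp only [ContinuousMap.coe_mk]
          rw [hφ' x]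
          norm_num
        map_one_left := by
          intro x
          funext i0
          simp only [ContinuousMap.coe_mk]
          norm_num [hgdef] }
  exact ⟨⟨fwd, fun hl => (construction hl).elim fun g hg => ⟨g, hg.1⟩⟩, construction⟩
end

section
/- Let f_{n,d}: S¹ → D_n(S¹) be the linear n-valued circle map of degree d, f_{n,d}(p(t)) = {p((dt+k)/n) : k = 1,...,n}. Then f_{n,d} has a proper partition if and only if n and d have a common factor m > 1; and if m = gcd(n,d) > 1, then f_{n,d} partitions into m submaps, each an (n/m)-valued map homotopic to the linear (n/m)-valued circle map of degree d/m. -/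
open Function Set

/-- The circle `S¹ = ℝ/ℤ`. -/
abbrev Circle1 := AddCircle (1 : ℝ)

/-- The covering projection `ℝ → S¹`, `t ↦ t mod 1`. -/
noncomputable def circleProj (t : ℝ) : Circle1 := (t : AddCircle (1 : ℝ))

/-- `f` is (a representative of) the linear `n`-valued circle map of degree `d`:
`f(p(t)) = {p((dt+1)/n), …, p((dt+n)/n)}`. -/
def IsLinearCircleMap (n : ℕ) (d : ℤ) (f : NValuedMap Circle1 Circle1 n) : Prop :=
  ∀ t : ℝ,
    UnordConf.values (f (circleProj t)) =
      Set.range fun k : Fin n => circleProj ((d * t + ((k : ℕ) + 1)) / n)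

section ConfAux
set_option linter.unusedSectionVars false
set_option linter.deprecated false
variable {Y : Type*} [TopologicalSpace Y] {k : ℕ}

lemma UnordConf.values_mk (a : OrdConf k Y) :
    UnordConf.values (Quotient.mk (confSetoid k Y) a) = Set.range a.1 := rfl

lemma UnordConf.values_injective :
    Function.Injective (UnordConf.values : UnordConf k Y → Set Y) := by
  intro u v h
  induction u using Quotient.inductionOn with | h a =>
  induction v using Quotient.inductionOn with | h b =>
  change Set.range a.1 = Set.range b.1 at h
  refine Quotient.sound ?_
  classical
  let σ : Fin k ≃ Fin k :=
    (Equiv.ofInjective b.1 b.2).trans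
      ((Equiv.setCongr h.symm).trans (Equiv.ofInjective a.1 a.2).symm)
  refine ⟨σ, funext fun i => ?_⟩
  show a.1 (σ i) = b.1 i
  simp only [σ, Equiv.trans_apply, Equiv.setCongr_apply]
  exact Equiv.apply_ofInjective_symm a.2 _

/-- Precomposition with a permutation, as a self-map of `OrdConf`. -/
def permComp (σ : Equiv.Perm (Fin k)) (a : OrdConf k Y) : OrdConf k Y :=
  ⟨a.1 ∘ σ, a.2.comp σ.injective⟩

lemma continuous_ordEval (i : Fin k) : Continuous fun a : OrdConf k Y => a.1 i :=
  (continuous_apply i).comp continuous_subtype_val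

lemma continuous_permComp (σ : Equiv.Perm (Fin k)) : Continuous (permComp (Y := Y) σ) := by
  have h : Continuous fun a : OrdConf k Y => fun i => a.1 (σ i) :=
    continuous_pi fun i => continuous_ordEval (σ i)
  exact h.subtype_mk _

lemma isOpenMap_unordMk : IsOpenMap (Quotient.mk (confSetoid k Y)) := by
  letI := confSetoid k Y
  intro U hU
  have hset : (Quotient.mk' : OrdConf k Y → UnordConf k Y) ⁻¹'
      (Quotient.mk' '' U) = ⋃ σ : Equiv.Perm (Fin k), permComp σ ⁻¹' U := by
    ext a
    simp only [Set.mem_preimage, Set.mem_image, Set.mem_iUnion]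
    constructor
    · rintro ⟨b, hbU, hb⟩
      obtain ⟨σ, hσ⟩ := Quotient.exact (hb.symm : (Quotient.mk' a : UnordConf k Y) = _)
      refine ⟨σ, ?_⟩
      show permComp σ a ∈ U
      have : permComp σ a = b := Subtype.ext hσ
      rwa [this]
    · rintro ⟨σ, ha⟩
      refine ⟨permComp σ a, ha, Quotient.sound ⟨σ⁻¹, funext fun i => ?_⟩⟩
      show a.1 (σ (σ⁻¹ i)) = a.1 i
      simp
  have hopen : IsOpen ((Quotient.mk' : OrdConf k Y → UnordConf k Y) ⁻¹' (Quotient.mk' '' U)) := by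
    rw [hset]; exact isOpen_iUnion fun σ => hU.preimage (continuous_permComp σ)
  exact (isQuotientMap_quotient_mk' (s := confSetoid k Y)).isOpen_preimage.mp hopen

lemma isClosed_valuesMem [T2Space Y] :
    IsClosed {p : UnordConf k Y × Y | p.2 ∈ p.1.values} := by
  letI := confSetoid k Y
  have hq : Topology.IsQuotientMap
      (Prod.map (Quotient.mk (confSetoid k Y)) (id : Y → Y)) :=
    (isOpenMap_unordMk.prodMap IsOpenMap.id).isQuotientMap
      (continuous_quotient_mk'.prodMap continuous_id)
      (Quotient.mk_surjective.prodMap surjective_id)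
  apply hq.isClosed_preimage.mp
  change IsClosed (Prod.map (Quotient.mk (confSetoid k Y)) (id : Y → Y) ⁻¹'
      {p : UnordConf k Y × Y | p.2 ∈ p.1.values})
  have hset : Prod.map (Quotient.mk (confSetoid k Y)) (id : Y → Y) ⁻¹'
      {p : UnordConf k Y × Y | p.2 ∈ p.1.values}
      = ⋃ i : Fin k, {p : OrdConf k Y × Y | p.1.1 i = p.2} := by
    ext ⟨a, y⟩
    show y ∈ UnordConf.values (Quotient.mk _ a) ↔ _
    rw [UnordConf.values_mk]
    simp only [Set.mem_range, Set.mem_iUnion, Set.mem_setOf_eq]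
  rw [hset]
  exact isClosed_iUnion_of_finite fun i =>
    isClosed_eq ((continuous_ordEval i).comp continuous_fst) continuous_snd

end ConfAux
section CircleAux
set_option linter.unusedSectionVars false
set_option linter.deprecated false

lemma circleProj_eq_iff {a b : ℝ} : circleProj a = circleProj b ↔ ∃ z : ℤ, b - a = z := by
  rw [circleProj, circleProj, QuotientAddGroup.eq]
  constructor
  · intro h
    obtain ⟨z, hz⟩ := AddSubgroup.mem_zmultiples_iff.mp h
    refine ⟨z, ?_⟩
    have : (z : ℝ) = -a + b := by simpa using hz
    linarith
  · rintro ⟨z, hz⟩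
    refine AddSubgroup.mem_zmultiples_iff.mpr ⟨z, ?_⟩
    have : (z : ℝ) = -a + b := by linarith
    simpa using this

lemma circleProj_eq_of_int {a b : ℝ} (z : ℤ) (h : b - a = z) : circleProj a = circleProj b :=
  circleProj_eq_iff.mpr ⟨z, h⟩

lemma circleProj_add_one (a : ℝ) : circleProj (a + 1) = circleProj a :=
  circleProj_eq_of_int (-1) (by push_cast; ring)

noncomputable def tup (n' : ℕ) (d' : ℤ) (c : ℝ) (t : ℝ) : Fin n' → Circle1 :=
  fun k => circleProj ((d' * t + c + (k : ℕ)) / n')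

lemma tup_injective {n' : ℕ} (hn' : 0 < n') (d' : ℤ) (c t : ℝ) :
    Function.Injective (tup n' d' c t) := by
  intro k k' h
  obtain ⟨z, hz⟩ := circleProj_eq_iff.mp h
  have hne : (n' : ℝ) ≠ 0 := Nat.cast_ne_zero.mpr hn'.ne'
  have hr : ((k' : ℕ) : ℝ) - ((k : ℕ) : ℝ) = z * n' := by
    field_simp at hz
    linarith
  have hi : ((k' : ℕ) : ℤ) - ((k : ℕ) : ℤ) = z * n' := by exact_mod_cast hr
  have hk := k.2
  have hk' := k'.2
  have hz0 : z = 0 := by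
    rcases lt_trichotomy z 0 with h0 | h0 | h0
    · nlinarith [Int.le_of_lt h0, (Int.ofNat_lt.mpr hk' : ((k' : ℕ) : ℤ) < n'),
        (Int.ofNat_nonneg (k : ℕ) : (0:ℤ) ≤ (k : ℕ)), mul_le_mul_of_nonneg_right
          (Int.add_one_le_iff.mpr h0) (Int.ofNat_nonneg n')]
    · exact h0
    · nlinarith [(Int.ofNat_lt.mpr hk : ((k : ℕ) : ℤ) < n'),
        (Int.ofNat_nonneg (k' : ℕ) : (0:ℤ) ≤ (k' : ℕ)),
        mul_le_mul_of_nonneg_right (Int.add_one_le_iff.mpr h0) (Int.ofNat_nonneg n')]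
  rw [hz0, zero_mul, sub_eq_zero] at hi
  exact (Fin.ext (by exact_mod_cast hi)).symm

noncomputable def ordTup {n' : ℕ} (hn' : 0 < n') (d' : ℤ) (c : ℝ) (t : ℝ) :
    OrdConf n' Circle1 :=
  ⟨tup n' d' c t, tup_injective hn' d' c t⟩

noncomputable def linMapAux {n' : ℕ} (hn' : 0 < n') (d' : ℤ) (c : ℝ) (t : ℝ) :
    UnordConf n' Circle1 :=
  Quotient.mk (confSetoid n' Circle1) (ordTup hn' d' c t)

lemma values_linMapAux {n' : ℕ} (hn' : 0 < n') (d' : ℤ) (c t : ℝ) :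
    UnordConf.values (linMapAux hn' d' c t) = Set.range (tup n' d' c t) := rfl

lemma continuous_linMapAux₂ {n' : ℕ} (hn' : 0 < n') (d' : ℤ) :
    Continuous fun p : ℝ × ℝ => linMapAux hn' d' p.1 p.2 := by
  apply Continuous.comp continuous_quotient_mk'
  apply Continuous.subtype_mk
  apply continuous_pi
  intro k
  exact continuous_quotient_mk'.comp (by fun_prop)

lemma periodic_linMapAux {n' : ℕ} (hn' : 0 < n') (d' : ℤ) (c : ℝ) :
    Function.Periodic (linMapAux hn' d' c) 1 := by
  intro t
  set dm : ℕ := (d' % (n' : ℤ)).toNat with hdm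
  have hnz : (0:ℤ) < (n' : ℤ) := by exact_mod_cast hn'
  have hdmlt : dm < n' := by
    have h1 : d' % (n' : ℤ) < n' := Int.emod_lt_of_pos _ hnz
    have h2 : 0 ≤ d' % (n' : ℤ) := Int.emod_nonneg _ hnz.ne'
    omega
  have hdmz : (dm : ℤ) = d' % (n' : ℤ) := Int.toNat_of_nonneg (Int.emod_nonneg _ hnz.ne')
  haveI : NeZero n' := ⟨hn'.ne'⟩
  let σ : Equiv.Perm (Fin n') := Equiv.addRight (⟨dm, hdmlt⟩ : Fin n')
  refine Eq.symm (Quotient.sound ⟨σ, funext fun k => ?_⟩)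
  show tup n' d' c t (σ k) = tup n' d' c (t + 1) k
  have hσval : ((σ k : Fin n') : ℕ) = ((k : ℕ) + dm) % n' := by
    simp [σ, Fin.val_add]
  set s : ℕ := ((k : ℕ) + dm) % n' with hs
  set z : ℤ := d' / (n' : ℤ) + (((k : ℕ) : ℤ) + dm) / (n' : ℤ) with hz
  have e1 : d' % (n':ℤ) + (n':ℤ) * (d' / (n':ℤ)) = d' := Int.emod_add_mul_ediv d' (n':ℤ)
  have e2 : (((k : ℕ) : ℤ) + dm) % (n':ℤ) + (n':ℤ) * ((((k : ℕ) : ℤ) + dm) / (n':ℤ))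
      = ((k : ℕ) : ℤ) + dm := Int.emod_add_mul_ediv _ _
  have hscast : (s : ℤ) = (((k : ℕ) : ℤ) + dm) % (n':ℤ) := by
    rw [hs]; push_cast; rfl
  have key : ((k : ℕ) : ℤ) + d' - (s : ℤ) = z * (n' : ℤ) := by
    rw [hscast, hz]; linarith
  unfold tup
  rw [hσval]
  apply circleProj_eq_of_int z
  have hne : (n' : ℝ) ≠ 0 := Nat.cast_ne_zero.mpr hn'.ne'
  have keyR : ((k : ℕ) : ℝ) + (d' : ℝ) - (s : ℝ) = (z : ℝ) * (n' : ℝ) := by exact_mod_cast key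
  field_simp
  linarith

noncomputable def linCircleMap {n' : ℕ} (hn' : 0 < n') (d' : ℤ) (c : ℝ) :
    NValuedMap Circle1 Circle1 n' where
  toFun := (periodic_linMapAux hn' d' c).lift
  continuous_toFun := by
    have hq : Topology.IsQuotientMap ((↑) : ℝ → Circle1) :=
      QuotientAddGroup.isOpenMap_coe.isQuotientMap continuous_quotient_mk'
        (fun x => Quotient.exists_rep x)
    rw [hq.continuous_iff]
    have : ((periodic_linMapAux hn' d' c).lift ∘ ((↑) : ℝ → Circle1)) = linMapAux hn' d' c :=
      funext fun t => (periodic_linMapAux hn' d' c).lift_coe t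
    rw [this]
    exact (continuous_linMapAux₂ hn' d').comp (Continuous.prodMk continuous_const continuous_id)

lemma linCircleMap_coe {n' : ℕ} (hn' : 0 < n') (d' : ℤ) (c t : ℝ) :
    linCircleMap hn' d' c (circleProj t) = linMapAux hn' d' c t :=
  (periodic_linMapAux hn' d' c).lift_coe t

lemma values_linCircleMap {n' : ℕ} (hn' : 0 < n') (d' : ℤ) (c t : ℝ) :
    UnordConf.values (linCircleMap hn' d' c (circleProj t)) = Set.range (tup n' d' c t) := by
  rw [linCircleMap_coe]; rfl

noncomputable def linHomotopy {n' : ℕ} (hn' : 0 < n') (d' : ℤ) (c₀ c₁ : ℝ) :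
    ContinuousMap.Homotopy (linCircleMap hn' d' c₀) (linCircleMap hn' d' c₁) where
  toFun := fun p => (periodic_linMapAux hn' d' (c₀ + (p.1 : ℝ) * (c₁ - c₀))).lift p.2
  continuous_toFun := by
    have hq : Topology.IsQuotientMap
        (Prod.map (id : unitInterval → unitInterval) ((↑) : ℝ → Circle1)) :=
      (IsOpenMap.id.prodMap QuotientAddGroup.isOpenMap_coe).isQuotientMap
        (continuous_id.prodMap continuous_quotient_mk')
        (surjective_id.prodMap fun x => Quotient.exists_rep x)
    rw [hq.continuous_iff]
    have heq : ((fun p : unitInterval × Circle1 =>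
        (periodic_linMapAux hn' d' (c₀ + (p.1 : ℝ) * (c₁ - c₀))).lift p.2) ∘
          Prod.map (id : unitInterval → unitInterval) ((↑) : ℝ → Circle1))
        = fun p : unitInterval × ℝ => linMapAux hn' d' (c₀ + (p.1 : ℝ) * (c₁ - c₀)) p.2 :=
      funext fun p => (periodic_linMapAux hn' d' _).lift_coe p.2
    rw [heq]
    exact (continuous_linMapAux₂ hn' d').comp
      (Continuous.prodMk (by fun_prop) continuous_snd)
  map_zero_left := by
    intro x
    induction x using QuotientAddGroup.induction_on with | H t =>
    have hc : c₀ + ((0 : unitInterval) : ℝ) * (c₁ - c₀) = c₀ := by norm_num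
    calc (periodic_linMapAux hn' d' (c₀ + ((0 : unitInterval) : ℝ) * (c₁ - c₀))).lift
          ((t : ℝ) : Circle1)
        = linMapAux hn' d' (c₀ + ((0 : unitInterval) : ℝ) * (c₁ - c₀)) t :=
          Function.Periodic.lift_coe _ t
      _ = linMapAux hn' d' c₀ t := by rw [hc]
      _ = linCircleMap hn' d' c₀ ((t : ℝ) : Circle1) := (linCircleMap_coe hn' d' c₀ t).symm
  map_one_left := by
    intro x
    induction x using QuotientAddGroup.induction_on with | H t =>
    have hc : c₀ + ((1 : unitInterval) : ℝ) * (c₁ - c₀) = c₁ := by norm_num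
    calc (periodic_linMapAux hn' d' (c₀ + ((1 : unitInterval) : ℝ) * (c₁ - c₀))).lift
          ((t : ℝ) : Circle1)
        = linMapAux hn' d' (c₀ + ((1 : unitInterval) : ℝ) * (c₁ - c₀)) t :=
          Function.Periodic.lift_coe _ t
      _ = linMapAux hn' d' c₁ t := by rw [hc]
      _ = linCircleMap hn' d' c₁ ((t : ℝ) : Circle1) := (linCircleMap_coe hn' d' c₁ t).symm

end CircleAux
section LinearAux
set_option linter.unusedSectionVars false
set_option linter.deprecated false

lemma range_tup_one {n' : ℕ} (d' : ℤ) (t : ℝ) :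
    Set.range (tup n' d' 1 t) =
      Set.range fun k : Fin n' => circleProj ((d' * t + ((k : ℕ) + 1)) / n') := by
  unfold tup
  exact congrArg Set.range (funext fun k => congrArg circleProj (by ring))

lemma isLinear_eq {n' : ℕ} (hn' : 0 < n') (d' : ℤ) (f' : NValuedMap Circle1 Circle1 n')
    (hf' : IsLinearCircleMap n' d' f') : f' = linCircleMap hn' d' 1 := by
  ext x
  induction x using QuotientAddGroup.induction_on with | H t =>
  apply UnordConf.values_injective
  have h1 : UnordConf.values (f' ((t : ℝ) : Circle1)) =
      Set.range fun k : Fin n' => circleProj ((d' * t + ((k : ℕ) + 1)) / n') := hf' t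
  rw [h1]
  have h2 : UnordConf.values (linCircleMap hn' d' 1 ((t : ℝ) : Circle1)) =
      Set.range (tup n' d' 1 t) := values_linCircleMap hn' d' 1 t
  rw [h2, range_tup_one]

/-- The key splitting of the `n` points into `m` groups of `n'` points. -/
lemma union_values {m n' n : ℕ} (hm : 0 < m) (hn' : 0 < n') {d' d : ℤ}
    (hd : (m : ℤ) * d' = d) (hnn : m * n' = n) (t : ℝ) :
    (Set.range fun k : Fin n => circleProj ((d * t + ((k : ℕ) + 1)) / n)) =
      ⋃ i : Fin m, Set.range (tup n' d' ((((i : ℕ) : ℝ) + 1) / m) t) := by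
  subst hnn
  subst hd
  have hmR : (m : ℝ) ≠ 0 := Nat.cast_ne_zero.mpr hm.ne'
  have hnR : (n' : ℝ) ≠ 0 := Nat.cast_ne_zero.mpr hn'.ne'
  ext y
  simp only [Set.mem_range, Set.mem_iUnion]
  constructor
  · rintro ⟨j, rfl⟩
    have hj := j.2
    refine ⟨⟨(j : ℕ) % m, Nat.mod_lt _ hm⟩, ⟨(j : ℕ) / m, ?_⟩, ?_⟩
    · exact Nat.div_lt_of_lt_mul hj
    · unfold tup
      congr 1
      have hmd : ((((j : ℕ) % m : ℕ)) : ℝ) + ((((j : ℕ) / m : ℕ)) : ℝ) * (m : ℝ)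
          = (((j : ℕ)) : ℝ) := by
        exact_mod_cast congrArg (Nat.cast : ℕ → ℝ) (Nat.mod_add_div' (j : ℕ) m)
      push_cast
      field_simp
      ring_nf
      ring_nf at hmd
      linarith [hmd]
  · rintro ⟨i, k, rfl⟩
    have hik : (i : ℕ) + (k : ℕ) * m < m * n' := by
      have h1 : (i : ℕ) < m := i.2
      have h2 : (k : ℕ) < n' := k.2
      calc (i : ℕ) + (k : ℕ) * m < m + (k : ℕ) * m := by omega
        _ = ((k : ℕ) + 1) * m := by ring
        _ ≤ n' * m := Nat.mul_le_mul_right m h2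
        _ = m * n' := Nat.mul_comm _ _
    refine ⟨⟨(i : ℕ) + (k : ℕ) * m, hik⟩, ?_⟩
    unfold tup
    congr 1
    push_cast
    field_simp
    ring
end LinearAux
section ForwardAux
set_option linter.unusedSectionVars false
set_option linter.deprecated false
set_option maxHeartbeats 1000000

lemma continuous_circleProj : Continuous circleProj := continuous_quotient_mk'

lemma values_out {k : ℕ} (u : UnordConf k Circle1) :
    UnordConf.values u = Set.range (Quotient.out u).1 := by
  conv_lhs => rw [← Quotient.out_eq u]
  rfl


lemma forward_gcd {n : ℕ} (hn : 0 < n) {d : ℤ} {f : NValuedMap Circle1 Circle1 n}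
    (hf : IsLinearCircleMap n d f) (hp : HasProperPartition f) : 1 < Int.gcd (n : ℤ) d := by
  classical
  obtain ⟨l, hl2, ⟨P⟩⟩ := hp
  have hnz : (0:ℤ) < (n:ℤ) := by exact_mod_cast hn
  have hnR : ((n:ℝ)) ≠ 0 := Nat.cast_ne_zero.mpr hn.ne'
  have hfv : ∀ t : ℝ, UnordConf.values (f (circleProj t)) = Set.range (tup n d 1 t) := by
    intro t; rw [hf t, range_tup_one]
  -- disjointness of the pieces
  have hdisj : ∀ (x : Circle1) (i i' : Fin l), i ≠ i' →
      ∀ y, y ∈ UnordConf.values (P.maps i x) → y ∈ UnordConf.values (P.maps i' x) → False := by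
    intro x i i' hii y hy hy'
    set F : (Σ i : Fin l, Fin (P.card i)) → Circle1 :=
      fun s => (Quotient.out (P.maps s.1 x)).1 s.2 with hF
    have hrange : Set.range F = UnordConf.values (f x) := by
      rw [Set.range_sigma_eq_iUnion_range, P.values_eq x]
      refine Set.iUnion_congr fun i => ?_
      rw [values_out ((P.maps i) x)]
    set w : OrdConf n Circle1 := Quotient.out (f x) with hw
    have hvf : UnordConf.values (f x) = Set.range w.1 := values_out _
    have hcard : Fintype.card (Σ i : Fin l, Fin (P.card i)) = n := by
      simp [Fintype.card_sigma, P.sum_card]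
    have himg : (Finset.univ.image F) = (Finset.univ.image w.1) := by
      apply Finset.coe_injective
      simp only [Finset.coe_image, Finset.coe_univ, Set.image_univ]
      rw [hrange, hvf]
    have hcardimg : (Finset.univ.image F).card = (Finset.univ : Finset (Σ i : Fin l, Fin (P.card i))).card := by
      rw [himg, Finset.card_image_of_injective Finset.univ w.2]
      simp [Finset.card_univ, hcard]
    have hinj : Function.Injective F := by
      have h := Finset.injOn_of_card_image_eq hcardimg
      intro a b hab
      exact h (by simp) (by simp) hab
    rw [values_out] at hy hy'
    obtain ⟨a, ha⟩ := hy
    obtain ⟨b, hb⟩ := hy'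
    have hFeq : F ⟨i, a⟩ = F ⟨i', b⟩ := by rw [hF]; exact ha.trans hb.symm
    exact hii (congrArg Sigma.fst (hinj hFeq))
  -- the indexed point on the circle
  set pt : ℤ → ℝ → Circle1 := fun j t => circleProj ((d * t + j) / n) with hpt
  set A : Fin l → ℤ → Set ℝ :=
    fun i j => {t | pt j t ∈ UnordConf.values (P.maps i (circleProj t))} with hA
  have hAclosed : ∀ i j, IsClosed (A i j) := by
    intro i j
    have hc : Continuous fun t : ℝ =>
        ((P.maps i (circleProj t), pt j t) : UnordConf (P.card i) Circle1 × Circle1) := by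
      apply Continuous.prodMk
      · exact (P.maps i).continuous.comp continuous_circleProj
      · exact continuous_circleProj.comp (by fun_prop)
    exact isClosed_valuesMem.preimage hc
  have hmem : ∀ (t : ℝ) (j : ℤ), pt j t ∈ UnordConf.values (f (circleProj t)) := by
    intro t j
    rw [hfv t]
    set k : ℕ := ((j - 1) % (n:ℤ)).toNat with hk
    have h1 := Int.emod_lt_of_pos (j-1) hnz
    have h2 := Int.emod_nonneg (j-1) hnz.ne'
    have hklt : k < n := by omega
    have hkz : (k : ℤ) = (j-1) % (n:ℤ) := Int.toNat_of_nonneg h2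
    refine ⟨⟨k, hklt⟩, ?_⟩
    show circleProj ((d*t + 1 + ((k:ℕ):ℝ))/n) = circleProj ((d*t + j)/n)
    apply circleProj_eq_of_int ((j-1) / (n:ℤ))
    have e1 : (j-1) % (n:ℤ) + (n:ℤ) * ((j-1) / (n:ℤ)) = j - 1 := Int.emod_add_mul_ediv _ _
    have key : j - 1 - (k:ℤ) = ((j-1) / (n:ℤ)) * (n:ℤ) := by rw [hkz]; linarith
    have keyR : (j:ℝ) - 1 - (k:ℝ) = (((j-1) / (n:ℤ) : ℤ):ℝ) * (n:ℝ) := by exact_mod_cast key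
    field_simp
    linarith
  have hcover : ∀ (t : ℝ) (j : ℤ), ∃ i, t ∈ A i j := by
    intro t j
    have h2 : pt j t ∈ ⋃ i, UnordConf.values (P.maps i (circleProj t)) := by
      rw [← P.values_eq]; exact hmem t j
    obtain ⟨i, hi⟩ := Set.mem_iUnion.mp h2
    exact ⟨i, hi⟩
  have hdich : ∀ i j, A i j = ∅ ∨ A i j = Set.univ := by
    intro i j
    refine isClopen_iff.mp ⟨hAclosed i j, ?_⟩
    rw [← isClosed_compl_iff]
    have hce : (A i j)ᶜ = ⋃ i' : {i' : Fin l // i' ≠ i}, A i' j := by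
      ext t
      simp only [Set.mem_compl_iff, Set.mem_iUnion]
      constructor
      · intro ht
        obtain ⟨i', hi'⟩ := hcover t j
        have hne : i' ≠ i := by rintro rfl; exact ht hi'
        exact ⟨⟨i', hne⟩, hi'⟩
      · rintro ⟨⟨i', hne⟩, hi'⟩ hti
        exact hdisj _ i' i hne _ hi' hti
    rw [hce]
    exact isClosed_iUnion_of_finite fun i' => hAclosed i' j
  have hAper : ∀ i j, A i (j + (n:ℤ)) = A i j := by
    intro i j
    have hpte : ∀ t, pt (j + n) t = pt j t := by
      intro t
      apply circleProj_eq_of_int (-1)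
      field_simp
      push_cast; ring
    ext t
    simp only [hA, Set.mem_setOf_eq]
    rw [hpte t]
  have hAshift : ∀ i j, A i (j + d) = (fun t : ℝ => t + 1) ⁻¹' (A i j) := by
    intro i j
    ext t
    show pt (j+d) t ∈ UnordConf.values (P.maps i (circleProj t)) ↔
      pt j (t+1) ∈ UnordConf.values (P.maps i (circleProj (t+1)))
    have h1 : circleProj (t+1) = circleProj t := circleProj_add_one t
    have h2 : pt j (t+1) = pt (j+d) t := congrArg circleProj (by push_cast; ring)
    rw [h1, h2]
  by_contra hle
  have hg0 : Int.gcd (n:ℤ) d ≠ 0 := by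
    intro h
    rw [Int.gcd_eq_zero_iff] at h
    exact (by exact_mod_cast hn.ne' : ((n:ℤ) ≠ 0)) h.1
  have hg1 : Int.gcd (n:ℤ) d = 1 := by omega
  set Q : Fin l → ℤ → Prop := fun i j => A i j = Set.univ with hQ
  have hQn : ∀ i j, Q i (j + (n:ℤ)) ↔ Q i j := by
    intro i j; rw [hQ]; simp only [hAper]
  have hQn' : ∀ i j, Q i (j - (n:ℤ)) ↔ Q i j := by
    intro i j
    have h := hQn i (j - (n:ℤ))
    rw [show j - (n:ℤ) + (n:ℤ) = j by ring] at h
    exact h.symm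
  have hQd : ∀ i j, Q i (j + d) ↔ Q i j := by
    intro i j
    constructor
    · intro h
      rcases hdich i j with h0 | h0
      · exfalso
        have h' : A i (j + d) = Set.univ := h
        rw [hAshift i j, h0] at h'
        rw [Set.preimage_empty] at h'
        exact Set.empty_ne_univ h'
      · exact h0
    · intro h
      show A i (j + d) = Set.univ
      rw [hAshift i j, show A i j = Set.univ from h]
      simp
  have hQd' : ∀ i j, Q i (j - d) ↔ Q i j := by
    intro i j
    have h := hQd i (j - d)
    rw [show j - d + d = j by ring] at h
    exact h.symm
  have hQmuln : ∀ i j (z : ℤ), Q i (j + z * (n:ℤ)) ↔ Q i j := by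
    intro i j z
    induction z using Int.induction_on with
    | zero => simp
    | succ m ih =>
      rw [show j + ((m:ℤ)+1) * (n:ℤ) = (j + m * n) + (n:ℤ) by ring, hQn]; exact ih
    | pred m ih =>
      rw [show j + (-(m:ℤ)-1) * (n:ℤ) = (j + (-(m:ℤ)) * n) - (n:ℤ) by ring, hQn']; exact ih
  have hQmuld : ∀ i j (z : ℤ), Q i (j + z * d) ↔ Q i j := by
    intro i j z
    induction z using Int.induction_on with
    | zero => simp
    | succ m ih =>
      rw [show j + ((m:ℤ)+1) * d = (j + m * d) + d by ring, hQd]; exact ih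
    | pred m ih =>
      rw [show j + (-(m:ℤ)-1) * d = (j + (-(m:ℤ)) * d) - d by ring, hQd']; exact ih
  have hQ1 : ∀ i j, Q i (j + 1) ↔ Q i j := by
    intro i j
    have hb := Int.gcd_eq_gcd_ab (n:ℤ) d
    rw [hg1] at hb
    have e : j + 1 = (j + Int.gcdB (n:ℤ) d * d) + Int.gcdA (n:ℤ) d * (n:ℤ) := by
      push_cast at hb
      linarith
    rw [e, hQmuln, hQmuld]
  have hQall : ∀ i j j', Q i j → Q i j' := by
    intro i j j' h
    have hz : ∀ z : ℤ, Q i (j + z) := by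
      intro z
      induction z using Int.induction_on with
      | zero => simpa
      | succ m ih =>
        rw [show j + ((m:ℤ)+1) = (j + m) + 1 by ring, hQ1]; exact ih
      | pred m ih =>
        have h1 := hQ1 i ((j + (-(m:ℤ))) - 1)
        rw [show (j + (-(m:ℤ))) - 1 + 1 = j + (-(m:ℤ)) by ring] at h1
        rw [show j + (-(m:ℤ)-1) = (j + (-(m:ℤ))) - 1 by ring]
        exact h1.mp ih
    have hfin := hz (j' - j)
    rwa [show j + (j' - j) = j' by ring] at hfin
  have hocc : ∀ i : Fin l, ∃ j, Q i j := by
    intro i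
    haveI : Nonempty (Fin (P.card i)) := Fin.pos_iff_nonempty.mp (P.card_pos i)
    have hne : (UnordConf.values (P.maps i (circleProj 0))).Nonempty := by
      rw [values_out]
      exact Set.range_nonempty _
    obtain ⟨y, hy⟩ := hne
    have hyf : y ∈ UnordConf.values (f (circleProj 0)) := by
      rw [P.values_eq]; exact Set.mem_iUnion.mpr ⟨i, hy⟩
    rw [hfv 0] at hyf
    obtain ⟨k, hk⟩ := hyf
    have h0 : (0:ℝ) ∈ A i (((k:ℕ):ℤ) + 1) := by
      simp only [hA, Set.mem_setOf_eq]
      have he : pt (((k:ℕ):ℤ)+1) 0 = y := by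
        rw [← hk]
        show circleProj ((d * 0 + ((((k:ℕ):ℤ) + 1 : ℤ)):ℝ) / n) =
          circleProj ((d * 0 + 1 + ((k:ℕ):ℝ))/n)
        exact congrArg circleProj (by push_cast; ring)
      rw [he]; exact hy
    rcases hdich i (((k:ℕ):ℤ)+1) with h | h
    · rw [h] at h0; exact absurd h0 (Set.notMem_empty 0)
    · exact ⟨_, h⟩
  have h0l : (0:ℕ) < l := by omega
  have h1l : (1:ℕ) < l := by omega
  obtain ⟨j0, hj0⟩ := hocc ⟨0, h0l⟩
  obtain ⟨j1, hj1⟩ := hocc ⟨1, h1l⟩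
  have hj0' : Q ⟨0,h0l⟩ j1 := hQall _ j0 j1 hj0
  have m0 : (0:ℝ) ∈ A ⟨0,h0l⟩ j1 := by
    rw [show A ⟨0,h0l⟩ j1 = Set.univ from hj0']; trivial
  have m1 : (0:ℝ) ∈ A ⟨1,h1l⟩ j1 := by
    rw [show A ⟨1,h1l⟩ j1 = Set.univ from hj1]; trivial
  have hne01 : (⟨0,h0l⟩ : Fin l) ≠ ⟨1,h1l⟩ := fun h => by simpa using congrArg Fin.val h
  exact hdisj (circleProj 0) ⟨0,h0l⟩ ⟨1,h1l⟩ hne01 (pt j1 0) m0 m1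
end ForwardAux
section PiecesAux
set_option linter.unusedSectionVars false
set_option linter.deprecated false

lemma pieces {n m : ℕ} {d : ℤ} (hn' : 0 < n / m) (hm : 0 < m) (hmn : m ∣ n) (hmd : (m:ℤ) ∣ d)
    (f : NValuedMap Circle1 Circle1 n) (hf : IsLinearCircleMap n d f) :
    ∀ x : Circle1, UnordConf.values (f x) =
        ⋃ i : Fin m, UnordConf.values
          (linCircleMap hn' (d / (m:ℤ)) ((((i:ℕ):ℝ) + 1) / m) x) := by
  have hnn : m * (n / m) = n := Nat.mul_div_cancel' hmn
  have hd : (m:ℤ) * (d / (m:ℤ)) = d := Int.mul_ediv_cancel' hmd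
  intro x
  induction x using QuotientAddGroup.induction_on with | H t =>
  have h1 : UnordConf.values (f ((t : ℝ) : Circle1)) = _ := hf t
  rw [h1, union_values hm hn' hd hnn t]
  exact Set.iUnion_congr fun i => (values_linCircleMap hn' _ _ t).symm

end PiecesAux

theorem statement_12 {n : ℕ} (hn : 0 < n) (d : ℤ)
    (f : NValuedMap Circle1 Circle1 n) (hf : IsLinearCircleMap n d f) :
    (HasProperPartition f ↔ ∃ m : ℤ, 1 < m ∧ m ∣ (n : ℤ) ∧ m ∣ d) ∧
    (∀ m : ℕ, m = Int.gcd (n : ℤ) d → 1 < m →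
      ∃ g : Fin m → NValuedMap Circle1 Circle1 (n / m),
        (∀ x : Circle1, UnordConf.values (f x) = ⋃ i, UnordConf.values (g i x)) ∧
        ∀ (i : Fin m) (f' : NValuedMap Circle1 Circle1 (n / m)),
          IsLinearCircleMap (n / m) (d / (m : ℤ)) f' → (g i).Homotopic f') := by
  constructor
  · constructor
    · intro hp
      have h := forward_gcd hn hf hp
      exact ⟨(Int.gcd (n:ℤ) d : ℤ), by exact_mod_cast h, Int.gcd_dvd_left _ _, Int.gcd_dvd_right _ _⟩
    · rintro ⟨m, hm1, hmn, hmd⟩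
      set M : ℕ := m.toNat with hM
      have hm0 : (0:ℤ) < m := by omega
      have hMm : (M:ℤ) = m := Int.toNat_of_nonneg hm0.le
      have hM2 : 2 ≤ M := by omega
      have hMn : M ∣ n := by
        have h2 : (M:ℤ) ∣ (n:ℤ) := hMm ▸ hmn
        exact_mod_cast h2
      have hMd : (M:ℤ) ∣ d := hMm ▸ hmd
      have hM0 : 0 < M := by omega
      have hn' : 0 < n / M := Nat.div_pos (Nat.le_of_dvd hn hMn) hM0
      exact ⟨M, hM2, ⟨{
        card := fun _ => n / M
        card_pos := fun _ => hn'
        maps := fun i => linCircleMap hn' (d / (M:ℤ)) ((((i:ℕ):ℝ) + 1) / M)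
        sum_card := by
          rw [Finset.sum_const, Finset.card_univ, Fintype.card_fin, smul_eq_mul]
          exact Nat.mul_div_cancel' hMn
        values_eq := pieces hn' hM0 hMn hMd f hf }⟩⟩
  · intro m hm hm1
    have hm0 : 0 < m := by omega
    have hmn : m ∣ n := by
      have h2 : ((m:ℕ):ℤ) ∣ (n:ℤ) := by rw [hm]; exact Int.gcd_dvd_left _ _
      exact_mod_cast h2
    have hmd : ((m:ℕ):ℤ) ∣ d := by rw [hm]; exact Int.gcd_dvd_right _ _
    have hn' : 0 < n / m := Nat.div_pos (Nat.le_of_dvd hn hmn) hm0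
    refine ⟨fun i => linCircleMap hn' (d / (m:ℤ)) ((((i:ℕ):ℝ) + 1) / m),
      pieces hn' hm0 hmn hmd f hf, ?_⟩
    intro i f' hf'
    rw [isLinear_eq hn' (d / (m:ℤ)) f' hf']
    exact ⟨linHomotopy hn' (d / (m:ℤ)) _ 1⟩
end

section
/- Let f: X → D_n(X) be an n-valued map on a connected finite polyhedron X, let X̂ = Γ_f with coordinate projections q(x,y) = x and F(x,y) = y, and let X̂_1,...,X̂_k denote the path components of X̂ with F_i = F restricted to X̂_i. Then the irreducible partition f = {f_1,...,f_k} of f has exactly k members if and only if X̂ has exactly k path components, and in this case (after reordering) f_i(x) = F_i(q^{-1}(x) ∩ X̂_i) for every x ∈ X and every i. -/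
open Function Set

/-- The graph of an `n`-valued map, as a subspace of `X × Y`. -/
def NVGraph {X Y : Type*} [TopologicalSpace X] [TopologicalSpace Y] {n : ℕ}
    (f : NValuedMap X Y n) : Type _ :=
  {p : X × Y // p.2 ∈ UnordConf.values (f p.1)}

instance {X Y : Type*} [TopologicalSpace X] [TopologicalSpace Y] {n : ℕ}
    (f : NValuedMap X Y n) : TopologicalSpace (NVGraph f) :=
  instTopologicalSpaceSubtype

/-- First-coordinate projection of the graph. -/
def NVGraph.q {X Y : Type*} [TopologicalSpace X] [TopologicalSpace Y] {n : ℕ}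
    {f : NValuedMap X Y n} (z : NVGraph f) : X := z.1.1

/-- Second-coordinate projection of the graph. -/
def NVGraph.F {X Y : Type*} [TopologicalSpace X] [TopologicalSpace Y] {n : ℕ}
    {f : NValuedMap X Y n} (z : NVGraph f) : Y := z.1.2

open Function Set

noncomputable section
open scoped Classical

namespace UnordConf

variable {n m : ℕ} {Y : Type*} [TopologicalSpace Y]

/-- Constructor for unordered configurations. -/
def mk (a : Fin n → Y) (ha : Function.Injective a) : UnordConf n Y :=
  Quotient.mk (confSetoid n Y) ⟨a, ha⟩

@[simp] lemma values_mk_s16 (a : Fin n → Y) (ha : Function.Injective a) :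
    (mk a ha).values = Set.range a := rfl

lemma exists_rep (c : UnordConf n Y) : ∃ (a : Fin n → Y) (ha : Function.Injective a),
    mk a ha = c := by
  obtain ⟨⟨a, ha⟩, rfl⟩ := Quotient.exists_rep c
  exact ⟨a, ha, rfl⟩

lemma mk_eq_mk_of_range_eq {a b : Fin n → Y} {ha : Function.Injective a}
    {hb : Function.Injective b} (h : Set.range a = Set.range b) : mk a ha = mk b hb := by
  refine Quotient.sound ?_
  -- need σ : Perm with a ∘ σ = b
  have ea : Fin n ≃ Set.range a := Equiv.ofInjective a ha
  have eb : Fin n ≃ Set.range b := Equiv.ofInjective b hb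
  refine ⟨(Equiv.ofInjective b hb).trans ((Equiv.setCongr h.symm).trans
    (Equiv.ofInjective a ha).symm), funext fun i => ?_⟩
  simp only [Function.comp_apply, Equiv.trans_apply]
  have : ∀ (y : Set.range a), a ((Equiv.ofInjective a ha).symm y) = y := fun y =>
    congrArg Subtype.val ((Equiv.ofInjective a ha).apply_symm_apply y)
  rw [this]
  rfl

lemma values_finite (c : UnordConf n Y) : c.values.Finite := by
  obtain ⟨a, ha, rfl⟩ := exists_rep c
  simpa using (Set.finite_range a)

lemma ncard_values (c : UnordConf n Y) : c.values.ncard = n := by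
  obtain ⟨a, ha, rfl⟩ := exists_rep c
  simp only [values_mk_s16]
  rw [← Set.image_univ, Set.ncard_image_of_injective _ ha, Set.ncard_univ, Nat.card_eq_fintype_card,
    Fintype.card_fin]

end UnordConf

lemma ncard_range_inj {α : Type*} {m : ℕ} (a : Fin m → α) (ha : Function.Injective a) :
    (Set.range a).ncard = m := by
  rw [← Set.image_univ, Set.ncard_image_of_injective _ ha, Set.ncard_univ,
    Nat.card_eq_fintype_card, Fintype.card_fin]

lemma exists_enum {α : Type*} {S : Set α} (hS : S.Finite) {m : ℕ} (hm : S.ncard = m) :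
    ∃ a : Fin m → α, Function.Injective a ∧ Set.range a = S := by
  have hcard : hS.toFinset.card = m := by rw [← Set.ncard_eq_toFinset_card _ hS, hm]
  have e : Fin m ≃ {x // x ∈ hS.toFinset} := (hcard ▸ hS.toFinset.equivFin).symm
  refine ⟨fun i => (e i).1, fun i j hij => e.injective (Subtype.ext hij), ?_⟩
  ext y
  simp only [Set.mem_range]
  constructor
  · rintro ⟨i, rfl⟩
    exact hS.mem_toFinset.mp (e i).2
  · intro hy
    exact ⟨e.symm ⟨y, hS.mem_toFinset.mpr hy⟩, by simp⟩

section Split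

variable {X : Type*} [TopologicalSpace X]

lemma continuous_restrict_mk {Y : Type*} [TopologicalSpace Y] {m : ℕ} {V : Set X}
    (s : X → Fin m → Y) (hcont : ∀ j, ContinuousOn (fun x => s x j) V)
    (hinj : ∀ x (hx : x ∈ V), Function.Injective (s x)) :
    Continuous (fun v : V => UnordConf.mk (s v.1) (hinj v.1 v.2)) := by
  have h1 : Continuous (fun v : V => (⟨s v.1, hinj v.1 v.2⟩ : OrdConf m Y)) := by
    apply Continuous.subtype_mk
    exact continuous_pi fun j => (hcont j).restrict
  exact Continuous.comp continuous_quotient_mk' h1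

lemma isOpen_matching {n : ℕ} (f : NValuedMap X X n) (W : Fin n → Set X)
    (hWo : ∀ j, IsOpen (W j)) :
    IsOpen {x | ∃ (c : Fin n → X) (hc : Function.Injective c),
      UnordConf.mk c hc = f x ∧ ∀ j, c j ∈ W j} := by
  have key : IsOpen {u : UnordConf n X | ∃ (c : Fin n → X) (hc : Function.Injective c),
      UnordConf.mk c hc = u ∧ ∀ j, c j ∈ W j} := by
    have hq : Topology.IsQuotientMap (X := OrdConf n X) (Y := UnordConf n X)
        (fun (a : OrdConf n X) => (Quotient.mk (confSetoid n X) a : UnordConf n X)) :=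
      isQuotientMap_quotient_mk'
    rw [← hq.isOpen_preimage]
    have heq : (fun (a : OrdConf n X) => (Quotient.mk (confSetoid n X) a : UnordConf n X)) ⁻¹' {u : UnordConf n X |
        ∃ (c : Fin n → X) (hc : Function.Injective c), UnordConf.mk c hc = u ∧ ∀ j, c j ∈ W j} =
        ⋃ σ : Equiv.Perm (Fin n), ⋂ j, {a : OrdConf n X | a.1 (σ j) ∈ W j} := by
      ext a
      simp only [Set.mem_preimage, Set.mem_setOf_eq, Set.mem_iUnion, Set.mem_iInter]
      constructor
      · rintro ⟨c, hc, hmk, hcW⟩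
        obtain ⟨σ, hσ⟩ := Quotient.exact hmk
        -- hσ : c ∘ σ = a.1
        exact ⟨σ.symm, fun j => by
          have := congrFun hσ (σ.symm j)
          simp only [Function.comp_apply, Equiv.apply_symm_apply] at this
          rw [← this]; exact hcW j⟩
      · rintro ⟨σ, hσ⟩
        refine ⟨fun j => a.1 (σ j), fun i j hij => σ.injective (a.2 hij), ?_, hσ⟩
        refine Quotient.sound ⟨σ.symm, funext fun j => ?_⟩
        simp [Function.comp_apply]
    erw [heq]
    refine isOpen_iUnion fun σ => isOpen_iInter_of_finite fun j => ?_
    exact IsOpen.preimage ((continuous_apply (σ j)).comp continuous_subtype_val) (hWo j)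
  exact key.preimage f.continuous

lemma matching_unique {n : ℕ} {W : Fin n → Set X}
    (hWd : Pairwise (Function.onFun Disjoint W)) {c : Fin n → X}
    (hcW : ∀ j, c j ∈ W j) {y : X} {j : Fin n}
    (hy : y ∈ Set.range c) (hyW : y ∈ W j) : y = c j := by
  obtain ⟨j', rfl⟩ := hy
  rcases eq_or_ne j' j with rfl | hne
  · rfl
  · exact absurd (hcW j') (Set.disjoint_left.mp (hWd hne).symm hyW)

lemma split [T2Space X] {n : ℕ} (f : NValuedMap X X n) {x₀ : X} {b : Fin n → X}
    {hb : Function.Injective b} (hrep : UnordConf.mk b hb = f x₀) {W : Fin n → Set X}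
    (hWo : ∀ j, IsOpen (W j)) (hWd : Pairwise (Function.onFun Disjoint W))
    (hbW : ∀ j, b j ∈ W j) :
    ∃ (V : Set X) (s : X → Fin n → X), IsOpen V ∧ x₀ ∈ V ∧
      (∀ j, ContinuousOn (fun x => s x j) V) ∧
      (∀ x (hx : x ∈ V), ∃ h : Function.Injective (s x), UnordConf.mk (s x) h = f x) ∧
      (∀ x ∈ V, ∀ j, s x j ∈ W j) ∧
      (∀ x ∈ V, ∀ (j : Fin n), ∀ y ∈ (f x).values, y ∈ W j → y = s x j) := by
  classical
  set Pred : X → Prop := fun x => ∃ (c : Fin n → X) (hc : Function.Injective c),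
    UnordConf.mk c hc = f x ∧ ∀ j, c j ∈ W j with hPred
  set V : Set X := {x | Pred x} with hV
  set s : X → Fin n → X := fun x => if hx : Pred x then hx.choose else b with hs
  have hspec : ∀ x (hx : x ∈ V), ∃ hc : Function.Injective (s x),
      UnordConf.mk (s x) hc = f x ∧ ∀ j, s x j ∈ W j := by
    intro x hx
    have hx' : Pred x := hx
    obtain ⟨hc, h1, h2⟩ := hx'.choose_spec
    refine ⟨by simp only [hs, dif_pos hx']; exact hc, ?_, ?_⟩ <;>
      simp only [hs, dif_pos hx']
    · exact h1
    · exact h2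
  have huniq : ∀ x ∈ V, ∀ (j : Fin n), ∀ y ∈ (f x).values, y ∈ W j → y = s x j := by
    intro x hx j y hy hyW
    obtain ⟨hc, h1, h2⟩ := hspec x hx
    have : (f x).values = Set.range (s x) := by rw [← h1]; rfl
    exact matching_unique hWd h2 (this ▸ hy) hyW
  refine ⟨V, s, isOpen_matching f W hWo, ⟨b, hb, hrep, hbW⟩, ?_,
    fun x hx => (hspec x hx).imp fun h hh => hh.1, fun x hx => (hspec x hx).2.2, huniq⟩
  -- continuity
  intro j₀
  rw [continuousOn_iff]
  intro x₁ hx₁ t ht hst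
  obtain ⟨hc₁, hmk₁, hcW₁⟩ := hspec x₁ hx₁
  set c₁ := s x₁
  obtain ⟨U, hU, hUd⟩ := Set.Finite.t2_separation (Set.finite_range c₁)
  set W' : Fin n → Set X := fun j => W j ∩ U (c₁ j) ∩ (if j = j₀ then t else Set.univ) with hW'
  have hW'o : ∀ j, IsOpen (W' j) := by
    intro j
    refine (((hWo j).inter (hU (c₁ j)).2).inter ?_)
    split <;> simp [ht]
  have hW'd : Pairwise (Function.onFun Disjoint W') := by
    intro i j hij
    have : Disjoint (U (c₁ i)) (U (c₁ j)) :=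
      hUd (Set.mem_range_self i) (Set.mem_range_self j) (fun h => hij (hc₁ h))
    exact Disjoint.mono (Set.inter_subset_left.trans Set.inter_subset_right)
      (Set.inter_subset_left.trans Set.inter_subset_right) this
  have hcW' : ∀ j, c₁ j ∈ W' j := by
    intro j
    refine ⟨⟨hcW₁ j, (hU (c₁ j)).1⟩, ?_⟩
    split
    · next h => rw [h]; exact hst
    · trivial
  set u : Set X := {x | ∃ (c : Fin n → X) (hc : Function.Injective c),
      UnordConf.mk c hc = f x ∧ ∀ j, c j ∈ W' j} with hu
  refine ⟨u, isOpen_matching f W' hW'o, ⟨c₁, hc₁, hmk₁, hcW'⟩, ?_⟩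
  rintro x ⟨⟨c, hc, hmk, hcW⟩, -⟩
  -- c is a witness for W too, deduce c j₀ = s x j₀
  have hxV : x ∈ V := ⟨c, hc, hmk, fun j => ((hcW j).1).1⟩
  have hcj : c j₀ = s x j₀ := by
    refine huniq x hxV j₀ (c j₀) ?_ ((hcW j₀).1.1)
    rw [← hmk]; exact ⟨j₀, rfl⟩
  have := (hcW j₀).2
  rw [if_pos rfl] at this
  simpa [Set.mem_preimage, ← hcj] using this

end Split


section Graph

variable {X : Type*} [TopologicalSpace X] {n : ℕ} (f : NValuedMap X X n)

lemma NVGraph.continuous_q : Continuous (NVGraph.q (f := f)) :=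
  continuous_fst.comp continuous_subtype_val

lemma NVGraph.continuous_F : Continuous (NVGraph.F (f := f)) :=
  continuous_snd.comp continuous_subtype_val

/-- The fiberwise trace of a subset of the graph. -/
def fib (C : Set (NVGraph f)) (x : X) : Set X :=
  {y | ∃ h : y ∈ (f x).values, (⟨(x, y), h⟩ : NVGraph f) ∈ C}

variable {f}

lemma fib_subset (C : Set (NVGraph f)) (x : X) : fib f C x ⊆ (f x).values :=
  fun _ hy => hy.1

lemma fib_finite (C : Set (NVGraph f)) (x : X) : (fib f C x).Finite :=
  ((f x).values_finite).subset (fib_subset C x)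

lemma graph_eta (z : NVGraph f) (h : NVGraph.F z ∈ (f (NVGraph.q z)).values) :
    (⟨(NVGraph.q z, NVGraph.F z), h⟩ : NVGraph f) = z := Subtype.ext rfl

lemma mem_fib_of_mem {C : Set (NVGraph f)} {z : NVGraph f} (hz : z ∈ C) :
    NVGraph.F z ∈ fib f C (NVGraph.q z) :=
  ⟨z.2, by rwa [graph_eta z z.2]⟩

lemma fib_mono {C D : Set (NVGraph f)} (h : C ⊆ D) (x : X) : fib f C x ⊆ fib f D x :=
  fun _ hy => ⟨hy.1, h hy.2⟩

lemma fib_union (C D : Set (NVGraph f)) (x : X) :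
    fib f (C ∪ D) x = fib f C x ∪ fib f D x := by
  ext y
  constructor
  · rintro ⟨h, hm | hm⟩
    · exact Or.inl ⟨h, hm⟩
    · exact Or.inr ⟨h, hm⟩
  · rintro (⟨h, hm⟩ | ⟨h, hm⟩)
    · exact ⟨h, Or.inl hm⟩
    · exact ⟨h, Or.inr hm⟩

lemma fib_disjoint {C D : Set (NVGraph f)} (h : Disjoint C D) (x : X) :
    Disjoint (fib f C x) (fib f D x) := by
  rw [Set.disjoint_left]
  rintro y ⟨hy, hmC⟩ ⟨hy', hmD⟩
  exact Set.disjoint_left.mp h hmC hmD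

lemma fib_univ (x : X) : fib f (Set.univ : Set (NVGraph f)) x = (f x).values := by
  ext y; exact ⟨fun hy => hy.1, fun hy => ⟨hy, trivial⟩⟩

lemma fib_empty_iff {C : Set (NVGraph f)} : (∀ x, fib f C x = ∅) ↔ C = ∅ := by
  constructor
  · intro h
    ext z
    simp only [Set.mem_empty_iff_false, iff_false]
    intro hz
    have := mem_fib_of_mem hz
    rw [h] at this
    exact this
  · rintro rfl x
    ext y
    simp only [Set.mem_empty_iff_false, iff_false]
    rintro ⟨h, hm⟩
    exact hm

lemma s_mem_values {s : X → Fin n → X} {V : Set X}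
    (hmk : ∀ x (hx : x ∈ V), ∃ h : Function.Injective (s x), UnordConf.mk (s x) h = f x)
    {x : X} (hx : x ∈ V) (j : Fin n) : s x j ∈ (f x).values := by
  obtain ⟨h, e⟩ := hmk x hx
  rw [← e]
  exact ⟨j, rfl⟩

/-- Local data for the graph around a point of `X`, refined to a path-connected base. -/
lemma graph_loc [T2Space X] [LocallyPathConnectedSpace X] (f : NValuedMap X X n) (x₀ : X)
    {A : Set X} (hA : IsOpen A) (hx₀A : x₀ ∈ A) {y₀ : X} (hy₀ : y₀ ∈ (f x₀).values)
    {B : Set X} (hB : IsOpen B) (hy₀B : y₀ ∈ B) :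
    ∃ (V : Set X) (s : X → Fin n → X) (W : Fin n → Set X) (j₀ : Fin n),
      IsOpen V ∧ IsPathConnected V ∧ x₀ ∈ V ∧ V ⊆ A ∧
      (∀ j, IsOpen (W j)) ∧ Pairwise (Function.onFun Disjoint W) ∧
      (∀ j, ContinuousOn (fun x => s x j) V) ∧
      (∀ x (hx : x ∈ V), ∃ h : Function.Injective (s x), UnordConf.mk (s x) h = f x) ∧
      (∀ x ∈ V, ∀ j, s x j ∈ W j) ∧
      (∀ x ∈ V, ∀ (j : Fin n), ∀ y ∈ (f x).values, y ∈ W j → y = s x j) ∧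
      s x₀ j₀ = y₀ ∧ W j₀ ⊆ B := by
  classical
  obtain ⟨b, hb, hrep⟩ := (f x₀).exists_rep
  have hy₀' : y₀ ∈ Set.range b := by rw [← hrep] at hy₀; exact hy₀
  obtain ⟨j₀, hj₀⟩ := hy₀'
  obtain ⟨U, hU, hUd⟩ := Set.Finite.t2_separation (Set.finite_range b)
  set W : Fin n → Set X := fun j => U (b j) ∩ (if j = j₀ then B else Set.univ) with hW
  have hWo : ∀ j, IsOpen (W j) := fun j => (hU (b j)).2.inter (by split <;> simp [hB])
  have hWd : Pairwise (Function.onFun Disjoint W) := by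
    intro i j hij
    have : Disjoint (U (b i)) (U (b j)) :=
      hUd (Set.mem_range_self i) (Set.mem_range_self j) (fun h => hij (hb h))
    exact this.mono Set.inter_subset_left Set.inter_subset_left
  have hbW : ∀ j, b j ∈ W j := by
    intro j
    refine ⟨(hU (b j)).1, ?_⟩
    split
    · next h => rw [h, hj₀]; exact hy₀B
    · trivial
  obtain ⟨V₁, s, hV₁o, hx₀V₁, hcont, hmk, hsW, huniq⟩ := split f hrep hWo hWd hbW
  set V : Set X := pathComponentIn (V₁ ∩ A) x₀ with hVdef
  have hVsub : V ⊆ V₁ ∩ A := pathComponentIn_subset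
  have hx₀V : x₀ ∈ V := mem_pathComponentIn_self ⟨hx₀V₁, hx₀A⟩
  refine ⟨V, s, W, j₀, (hV₁o.inter hA).pathComponentIn _,
    isPathConnected_pathComponentIn ⟨hx₀V₁, hx₀A⟩, hx₀V, fun x hx => (hVsub hx).2,
    hWo, hWd, fun j => (hcont j).mono (fun x hx => (hVsub hx).1),
    fun x hx => hmk x (hVsub hx).1, fun x hx => hsW x (hVsub hx).1,
    fun x hx => huniq x (hVsub hx).1, ?_, ?_⟩
  · exact (huniq x₀ hx₀V₁ j₀ y₀ hy₀ (hj₀ ▸ hbW j₀)).symm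
  · intro y hy
    have := hy.2
    rwa [if_pos rfl] at this

/-- Each sheet over a path-connected base is path connected. -/
lemma sheet_pc {V : Set X} {s : X → Fin n → X} {W : Fin n → Set X}
    (hVpc : IsPathConnected V)
    (hcont : ∀ j, ContinuousOn (fun x => s x j) V)
    (hmk : ∀ x (hx : x ∈ V), ∃ h : Function.Injective (s x), UnordConf.mk (s x) h = f x)
    (hsW : ∀ x ∈ V, ∀ j, s x j ∈ W j)
    (huniq : ∀ x ∈ V, ∀ (j : Fin n), ∀ y ∈ (f x).values, y ∈ W j → y = s x j) (j : Fin n) :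
    IsPathConnected {z : NVGraph f | NVGraph.q z ∈ V ∧ NVGraph.F z ∈ W j} := by
  have hσ : Continuous (fun v : V => (⟨(v.1, s v.1 j), s_mem_values hmk v.2 j⟩ : NVGraph f)) := by
    apply Continuous.subtype_mk
    exact continuous_subtype_val.prodMk (hcont j).restrict
  have himg : (fun v : V => (⟨(v.1, s v.1 j), s_mem_values hmk v.2 j⟩ : NVGraph f)) ''
      Set.univ = {z : NVGraph f | NVGraph.q z ∈ V ∧ NVGraph.F z ∈ W j} := by
    ext z
    constructor
    · rintro ⟨v, -, rfl⟩
      exact ⟨v.2, hsW v.1 v.2 j⟩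
    · rintro ⟨hzq, hzF⟩
      have : NVGraph.F z = s (NVGraph.q z) j := huniq _ hzq j _ z.2 hzF
      refine ⟨⟨NVGraph.q z, hzq⟩, trivial, ?_⟩
      apply Subtype.ext
      exact Prod.ext rfl this.symm
  rw [← himg]
  have : PathConnectedSpace V := isPathConnected_iff_pathConnectedSpace.mp hVpc
  exact (pathConnectedSpace_iff_univ.mp this).image hσ

lemma locPathConnected_graph [T2Space X] [LocallyPathConnectedSpace X] (f : NValuedMap X X n) :
    LocallyPathConnectedSpace (NVGraph f) := by
  rw [locPathConnectedSpace_iff_pathComponentIn_mem_nhds]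
  intro z u hu hzu
  obtain ⟨U, hU, hval⟩ := isOpen_induced_iff.mp hu
  have hzU : z.1 ∈ U := by rw [← hval] at hzu; exact hzu
  obtain ⟨A, B, hA, hB, hzA, hzB, hABU⟩ := isOpen_prod_iff.mp hU z.1.1 z.1.2 hzU
  obtain ⟨V, s, W, j₀, hVo, hVpc, hx₀V, hVA, hWo, hWd, hcont, hmk, hsW, huniq, hs₀, hWB⟩ :=
    graph_loc f (NVGraph.q z) hA hzA z.2 hB hzB
  set Sh : Set (NVGraph f) := {z' : NVGraph f | NVGraph.q z' ∈ V ∧ NVGraph.F z' ∈ W j₀} with hSh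
  have hShpc : IsPathConnected Sh := sheet_pc hVpc hcont hmk hsW huniq j₀
  have hzSh : z ∈ Sh := by
    refine ⟨hx₀V, ?_⟩
    have he : NVGraph.F z = s (NVGraph.q z) j₀ := hs₀.symm
    rw [he]
    exact hsW _ hx₀V j₀
  have hShu : Sh ⊆ u := by
    rintro z' ⟨hq, hF⟩
    rw [← hval]
    exact hABU ⟨hVA hq, hWB hF⟩
  have hSho : IsOpen Sh :=
    ((NVGraph.continuous_q f).isOpen_preimage V hVo).inter
      ((NVGraph.continuous_F f).isOpen_preimage (W j₀) (hWo j₀))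
  exact Filter.mem_of_superset (hSho.mem_nhds hzSh)
    (hShpc.subset_pathComponentIn hzSh hShu)

end Graph

section Clopen

variable {X : Type*} [TopologicalSpace X] {n : ℕ} {f : NValuedMap X X n}

lemma fib_loc [T2Space X] [LocallyPathConnectedSpace X] {C : Set (NVGraph f)} (hC : IsClopen C)
    (x₀ : X) :
    ∃ (V : Set X) (m : ℕ) (h : X → Fin m → X), IsOpen V ∧ x₀ ∈ V ∧
      (∀ i, ContinuousOn (fun x => h x i) V) ∧
      (∀ x (hx : x ∈ V), Function.Injective (h x)) ∧
      (∀ x ∈ V, Set.range (h x) = fib f C x) := by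
  classical
  obtain ⟨b, hb, hrep⟩ := (f x₀).exists_rep
  rcases Nat.eq_zero_or_pos n with hn | hn
  · subst hn
    refine ⟨Set.univ, 0, fun _ i => i.elim0, isOpen_univ, trivial, fun i => i.elim0,
      fun x _ a => a.elim0, fun x _ => ?_⟩
    have h1 : (f x).values = ∅ := by
      obtain ⟨a, ha, hra⟩ := (f x).exists_rep
      rw [← hra, UnordConf.values_mk_s16]
      exact Set.range_eq_empty a
    have h2 := fib_subset (f := f) C x
    rw [h1, Set.subset_empty_iff] at h2
    rw [h2]
    exact Set.range_eq_empty _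
  · have hy₀ : b ⟨0, hn⟩ ∈ (f x₀).values := by rw [← hrep]; exact ⟨_, rfl⟩
    obtain ⟨V, s, W, j₀, hVo, hVpc, hx₀V, -, hWo, hWd, hcont, hmk, hsW, huniq, -, -⟩ :=
      graph_loc f x₀ isOpen_univ trivial hy₀ isOpen_univ trivial
    set J : Finset (Fin n) := Finset.univ.filter
      (fun j => (⟨(x₀, s x₀ j), s_mem_values hmk hx₀V j⟩ : NVGraph f) ∈ C) with hJ
    have key : ∀ x (hx : x ∈ V), ∀ j : Fin n,
        ((⟨(x, s x j), s_mem_values hmk hx j⟩ : NVGraph f) ∈ C ↔ j ∈ J) := by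
      intro x hx j
      have hpc := sheet_pc hVpc hcont hmk hsW huniq j
      have hmem : ∀ x' (hx' : x' ∈ V), (⟨(x', s x' j), s_mem_values hmk hx' j⟩ : NVGraph f) ∈
          {z : NVGraph f | NVGraph.q z ∈ V ∧ NVGraph.F z ∈ W j} := fun x' hx' =>
        ⟨hx', hsW x' hx' j⟩
      constructor
      · intro hmC
        have hsub := hpc.isConnected.isPreconnected.subset_isClopen hC ⟨_, hmem x hx, hmC⟩
        simp only [hJ, Finset.mem_filter, Finset.mem_univ, true_and]
        exact hsub (hmem x₀ hx₀V)
      · intro hjJ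
        simp only [hJ, Finset.mem_filter, Finset.mem_univ, true_and] at hjJ
        have hsub := hpc.isConnected.isPreconnected.subset_isClopen hC ⟨_, hmem x₀ hx₀V, hjJ⟩
        exact hsub (hmem x hx)
    set m := J.card with hm
    set ι : Fin m → Fin n := fun i => ((J.orderIsoOfFin rfl) i).1 with hι
    have hιinj : Function.Injective ι := fun i j hij =>
      (J.orderIsoOfFin rfl).injective (Subtype.ext hij)
    have hιJ : ∀ i, ι i ∈ J := fun i => ((J.orderIsoOfFin rfl) i).2
    have hιsurj : ∀ j ∈ J, ∃ i, ι i = j := by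
      intro j hj
      exact ⟨(J.orderIsoOfFin rfl).symm ⟨j, hj⟩,
        congrArg Subtype.val ((J.orderIsoOfFin rfl).apply_symm_apply ⟨j, hj⟩)⟩
    refine ⟨V, m, fun x i => s x (ι i), hVo, hx₀V, fun i => hcont (ι i), ?_, ?_⟩
    · intro x hx i j hij
      obtain ⟨hinj, -⟩ := hmk x hx
      exact hιinj (hinj hij)
    · intro x hx
      ext y
      simp only [Set.mem_range]
      constructor
      · rintro ⟨i, rfl⟩
        exact ⟨s_mem_values hmk hx (ι i), (key x hx (ι i)).mpr (hιJ i)⟩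
      · rintro ⟨hy1, hy2⟩
        have hy3 : y ∈ Set.range (s x) := by
          obtain ⟨hinj, e⟩ := hmk x hx
          rw [← e] at hy1
          exact hy1
        obtain ⟨j, hj⟩ := hy3
        have hjm : (⟨(x, s x j), s_mem_values hmk hx j⟩ : NVGraph f) ∈ C := by
          have : (⟨(x, s x j), s_mem_values hmk hx j⟩ : NVGraph f) = ⟨(x, y), hy1⟩ :=
            Subtype.ext (Prod.ext rfl hj)
          rw [this]
          exact hy2
        obtain ⟨i, hi⟩ := hιsurj j ((key x hx j).mp hjm)
        exact ⟨i, by rw [hi, hj]⟩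

lemma exists_submap_of_clopen [T2Space X] [LocallyPathConnectedSpace X] [PreconnectedSpace X]
    [Nonempty X] {C : Set (NVGraph f)} (hC : IsClopen C) :
    ∃ (m : ℕ) (g : NValuedMap X X m), ∀ x, (g x).values = fib f C x := by
  classical
  have hlc : IsLocallyConstant (fun x => (fib f C x).ncard) := by
    rw [IsLocallyConstant.iff_exists_open]
    intro x₀
    obtain ⟨V, m', h, hVo, hx₀V, hhc, hhi, hhr⟩ := fib_loc hC x₀
    refine ⟨V, hVo, hx₀V, fun y hy => ?_⟩
    rw [← hhr y hy, ← hhr x₀ hx₀V, ncard_range_inj _ (hhi y hy),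
      ncard_range_inj _ (hhi x₀ hx₀V)]
  set x₀ : X := Classical.arbitrary X with hx₀
  set m : ℕ := (fib f C x₀).ncard with hm
  have hconst : ∀ x, (fib f C x).ncard = m := fun x =>
    hlc.apply_eq_of_preconnectedSpace x x₀
  choose a hinj hrange using fun x => exists_enum (fib_finite C x) (hconst x)
  have hval : ∀ x, (UnordConf.mk (a x) (hinj x)).values = fib f C x := by
    intro x
    rw [UnordConf.values_mk_s16, hrange x]
  have hcont : Continuous (fun x => UnordConf.mk (a x) (hinj x)) := by
    rw [continuous_iff_continuousAt]
    intro y₀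
    obtain ⟨V, m', h, hVo, hy₀V, hhc, hhi, hhr⟩ := fib_loc hC y₀
    have hm' : m' = m := by
      have h1 : (Set.range (h y₀)).ncard = m' := ncard_range_inj _ (hhi y₀ hy₀V)
      rw [hhr y₀ hy₀V, hconst y₀] at h1
      exact h1.symm
    subst hm'
    have hres : Continuous (fun v : V => UnordConf.mk (h v.1) (hhi v.1 v.2)) :=
      continuous_restrict_mk _ hhc hhi
    have hco : ContinuousOn (fun x => UnordConf.mk (a x) (hinj x)) V := by
      rw [continuousOn_iff_continuous_restrict]
      have : Set.domRestrict V (fun x => UnordConf.mk (a x) (hinj x)) =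
          fun v : V => UnordConf.mk (h v.1) (hhi v.1 v.2) := by
        funext v
        exact UnordConf.mk_eq_mk_of_range_eq (by rw [hrange, hhr v.1 v.2])
      rw [this]
      exact hres
    exact hco.continuousAt (hVo.mem_nhds hy₀V)
  exact ⟨m, ⟨fun x => UnordConf.mk (a x) (hinj x), hcont⟩, hval⟩

lemma isClopen_graph_of_submap [T2Space X] {k : ℕ} {g : NValuedMap X X k}
    (hsub : IsSubmap g f) :
    IsClopen {z : NVGraph f | NVGraph.F z ∈ (g (NVGraph.q z)).values} := by
  classical
  -- common local setup
  have setup : ∀ z₀ : NVGraph f, ∃ (Vf Vg : Set X) (s : X → Fin n → X) (t : X → Fin k → X)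
      (W : Fin n → Set X) (ρ : Fin k → Fin n),
      IsOpen Vf ∧ IsOpen Vg ∧ NVGraph.q z₀ ∈ Vf ∧ NVGraph.q z₀ ∈ Vg ∧
      (∀ j, IsOpen (W j)) ∧ Pairwise (Function.onFun Disjoint W) ∧
      (∀ x (hx : x ∈ Vf), ∃ h : Function.Injective (s x), UnordConf.mk (s x) h = f x) ∧
      (∀ x ∈ Vf, ∀ j, s x j ∈ W j) ∧
      (∀ x ∈ Vf, ∀ (j : Fin n), ∀ y ∈ (f x).values, y ∈ W j → y = s x j) ∧
      (∀ x (hx : x ∈ Vg), ∃ h : Function.Injective (t x), UnordConf.mk (t x) h = g x) ∧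
      (∀ x ∈ Vg, ∀ i, t x i ∈ W (ρ i)) ∧
      (∀ y ∈ (g (NVGraph.q z₀)).values, ∃ i : Fin k, y ∈ W (ρ i) ∧
        (∀ j, y ∈ W j → j = ρ i)) ∧
      (∀ y ∈ (f (NVGraph.q z₀)).values, ∃ j : Fin n, y ∈ W j) := by
    intro z₀
    set x₀ := NVGraph.q z₀ with hx₀
    obtain ⟨b, hb, hrepf⟩ := (f x₀).exists_rep
    obtain ⟨d, hd, hrepg⟩ := (g x₀).exists_rep
    obtain ⟨U, hU, hUd⟩ := Set.Finite.t2_separation (Set.finite_range b)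
    set W : Fin n → Set X := fun j => U (b j) with hW
    have hWo : ∀ j, IsOpen (W j) := fun j => (hU (b j)).2
    have hWd : Pairwise (Function.onFun Disjoint W) := fun i j hij =>
      hUd (Set.mem_range_self i) (Set.mem_range_self j) (fun h => hij (hb h))
    have hbW : ∀ j, b j ∈ W j := fun j => (hU (b j)).1
    -- each value of g is a value of f
    have hdb : ∀ i, ∃ j, b j = d i := by
      intro i
      have : d i ∈ (f x₀).values := hsub x₀ (by rw [← hrepg]; exact ⟨i, rfl⟩)
      rw [← hrepf] at this
      exact this
    choose ρ hρ using hdb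
    have hWρo : ∀ i, IsOpen (W (ρ i)) := fun i => hWo (ρ i)
    have hρinj : Function.Injective ρ := by
      intro i j hij
      apply hd
      rw [← hρ i, ← hρ j, hij]
    have hWρd : Pairwise (Function.onFun Disjoint (fun i => W (ρ i))) := fun i j hij =>
      hWd (fun h => hij (hρinj h))
    have hdW : ∀ i, d i ∈ W (ρ i) := fun i => (hρ i) ▸ hbW (ρ i)
    obtain ⟨Vf, s, hVfo, hx₀Vf, -, hmkf, hsWf, huniqf⟩ := split f hrepf hWo hWd hbW
    obtain ⟨Vg, t, hVgo, hx₀Vg, -, hmkg, htWg, -⟩ := split g hrepg hWρo hWρd hdW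
    refine ⟨Vf, Vg, s, t, W, ρ, hVfo, hVgo, hx₀Vf, hx₀Vg, hWo, hWd, hmkf, hsWf, huniqf,
      hmkg, htWg, ?_, ?_⟩
    · intro y hy
      rw [← hrepg] at hy
      obtain ⟨i, rfl⟩ := hy
      refine ⟨i, hdW i, fun j hj => ?_⟩
      by_contra hne
      exact Set.disjoint_left.mp (hWd hne) hj (hdW i)
    · intro y hy
      rw [← hrepf] at hy
      obtain ⟨j, rfl⟩ := hy
      exact ⟨j, hbW j⟩
  constructor
  · -- closed: complement is open
    rw [← isOpen_compl_iff]
    rw [isOpen_iff_forall_mem_open]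
    intro z₀ hz₀
    obtain ⟨Vf, Vg, s, t, W, ρ, hVfo, hVgo, hqVf, hqVg, hWo, hWd, hmkf, hsWf, huniqf,
      hmkg, htWg, hgW, hfW⟩ := setup z₀
    obtain ⟨j₀, hj₀⟩ := hfW (NVGraph.F z₀) z₀.2
    have hj₀ρ : ∀ i, ρ i ≠ j₀ := by
      intro i hi
      apply hz₀
      have := htWg (NVGraph.q z₀) hqVg i
      rw [hi] at this
      have hmem : t (NVGraph.q z₀) i ∈ (g (NVGraph.q z₀)).values := s_mem_values hmkg hqVg i
      have heq : NVGraph.F z₀ = t (NVGraph.q z₀) i := by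
        -- both in W j₀ and both values of f... use uniqueness for f
        have h1 : NVGraph.F z₀ = s (NVGraph.q z₀) j₀ :=
          huniqf _ hqVf j₀ _ z₀.2 hj₀
        have h2 : t (NVGraph.q z₀) i = s (NVGraph.q z₀) j₀ :=
          huniqf _ hqVf j₀ _ (hsub _ hmem) this
        rw [h1, h2]
      show NVGraph.F z₀ ∈ (g (NVGraph.q z₀)).values
      rw [heq]
      exact hmem
    refine ⟨{z : NVGraph f | NVGraph.q z ∈ Vf ∩ Vg ∧ NVGraph.F z ∈ W j₀}, ?_, ?_, ⟨⟨hqVf, hqVg⟩, hj₀⟩⟩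
    · rintro z ⟨⟨hzVf, hzVg⟩, hzW⟩
      intro hmem
      -- F z ∈ values g (q z) = range (t (q z))
      have hrg : (g (NVGraph.q z)).values = Set.range (t (NVGraph.q z)) := by
        obtain ⟨hi, e⟩ := hmkg _ hzVg
        rw [← e, UnordConf.values_mk_s16]
      have hmem' : NVGraph.F z ∈ Set.range (t (NVGraph.q z)) := by
        rw [← hrg]; exact hmem
      obtain ⟨i, hi⟩ := hmem'
      have h1 : t (NVGraph.q z) i ∈ W (ρ i) := htWg _ hzVg i
      rw [hi] at h1
      exact Set.disjoint_left.mp (hWd (hj₀ρ i)) h1 hzW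
    · exact (((NVGraph.continuous_q f).isOpen_preimage _ (hVfo.inter hVgo)).inter
        ((NVGraph.continuous_F f).isOpen_preimage _ (hWo j₀)))
  · rw [isOpen_iff_forall_mem_open]
    intro z₀ hz₀
    obtain ⟨Vf, Vg, s, t, W, ρ, hVfo, hVgo, hqVf, hqVg, hWo, hWd, hmkf, hsWf, huniqf,
      hmkg, htWg, hgW, hfW⟩ := setup z₀
    obtain ⟨i₀, hi₀W, -⟩ := hgW (NVGraph.F z₀) hz₀
    refine ⟨{z : NVGraph f | NVGraph.q z ∈ Vf ∩ Vg ∧ NVGraph.F z ∈ W (ρ i₀)}, ?_, ?_,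
      ⟨⟨hqVf, hqVg⟩, hi₀W⟩⟩
    · rintro z ⟨⟨hzVf, hzVg⟩, hzW⟩
      have h1 : NVGraph.F z = s (NVGraph.q z) (ρ i₀) :=
        huniqf _ hzVf (ρ i₀) _ z.2 hzW
      have hmem : t (NVGraph.q z) i₀ ∈ (g (NVGraph.q z)).values := s_mem_values hmkg hzVg i₀
      have h2 : t (NVGraph.q z) i₀ = s (NVGraph.q z) (ρ i₀) :=
        huniqf _ hzVf (ρ i₀) _ (hsub _ hmem) (htWg _ hzVg i₀)
      show NVGraph.F z ∈ (g (NVGraph.q z)).values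
      rw [h1, ← h2]
      exact hmem
    · exact (((NVGraph.continuous_q f).isOpen_preimage _ (hVfo.inter hVgo)).inter
        ((NVGraph.continuous_F f).isOpen_preimage _ (hWo (ρ i₀))))

end Clopen

section Polyhedron

open Geometry

/-- A finite simplicial complex's space is locally path connected. -/
lemma SimplicialComplex.locPathConnectedSpace {N : ℕ}
    (K : Geometry.SimplicialComplex ℝ (EuclideanSpace ℝ (Fin N)))
    (hfin : K.faces.Finite) : LocallyPathConnectedSpace K.space := by
  rw [locPathConnectedSpace_iff_pathComponentIn_mem_nhds]
  intro z u hu hzu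
  obtain ⟨U, hU, hval⟩ := isOpen_induced_iff.mp hu
  have hzU : (z : EuclideanSpace ℝ (Fin N)) ∈ U := by rw [← hval] at hzu; exact hzu
  obtain ⟨ε, hε, hball⟩ := Metric.isOpen_iff.mp hU z hzU
  set x : EuclideanSpace ℝ (Fin N) := (z : EuclideanSpace ℝ (Fin N)) with hx
  set B := Metric.ball x ε with hB
  set bad : Set (Finset (EuclideanSpace ℝ (Fin N))) :=
    {s ∈ K.faces | x ∉ convexHull ℝ (s : Set (EuclideanSpace ℝ (Fin N)))} with hbad
  set Cl : Set (EuclideanSpace ℝ (Fin N)) :=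
    ⋃ s ∈ bad, convexHull ℝ (s : Set (EuclideanSpace ℝ (Fin N))) with hCl
  have hClclosed : IsClosed Cl :=
    Set.Finite.isClosed_biUnion (hfin.subset (fun s hs => hs.1))
      (fun s _ => ((s : Set (EuclideanSpace ℝ (Fin N))).toFinite.isCompact_convexHull ℝ).isClosed)
  have hxCl : x ∉ Cl := by
    intro hxCl
    obtain ⟨s, hs, hxs⟩ := Set.mem_iUnion₂.mp hxCl
    exact hs.2 hxs
  set P₀ : Set (EuclideanSpace ℝ (Fin N)) :=
    ⋃ s ∈ {s ∈ K.faces | x ∈ convexHull ℝ (s : Set (EuclideanSpace ℝ (Fin N)))},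
      (convexHull ℝ (s : Set (EuclideanSpace ℝ (Fin N))) ∩ B) with hP₀
  have hxP₀ : x ∈ P₀ := by
    have hzsp := z.2
    rw [Geometry.SimplicialComplex.mem_space_iff] at hzsp
    obtain ⟨s, hs, hxs⟩ := hzsp
    exact Set.mem_iUnion₂.mpr ⟨s, ⟨hs, hxs⟩, hxs, Metric.mem_ball_self hε⟩
  have hP₀pc : IsPathConnected P₀ := by
    rw [isPathConnected_iff]
    constructor
    · exact ⟨x, hxP₀⟩
    · have key : ∀ y ∈ P₀, JoinedIn P₀ x y := by
        rintro y hy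
        obtain ⟨s, hs, hys⟩ := Set.mem_iUnion₂.mp hy
        have hconv : Convex ℝ (convexHull ℝ (s : Set (EuclideanSpace ℝ (Fin N))) ∩ B) :=
          (convex_convexHull ℝ _).inter (convex_ball x ε)
        have hxmem : x ∈ convexHull ℝ (s : Set (EuclideanSpace ℝ (Fin N))) ∩ B :=
          ⟨hs.2, Metric.mem_ball_self hε⟩
        have hj := (hconv.isPathConnected ⟨x, hxmem⟩).joinedIn x hxmem y hys
        rw [hP₀]
        exact hj.mono (Set.subset_iUnion₂ (s := fun (t : Finset (EuclideanSpace ℝ (Fin N))) (_ : t ∈ {s | s ∈ K.faces ∧ x ∈ convexHull ℝ (s : Set (EuclideanSpace ℝ (Fin N)))}) => convexHull ℝ (t : Set (EuclideanSpace ℝ (Fin N))) ∩ B) s hs)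
      intro y hy y' hy'
      exact (key y hy).symm.trans (key y' hy')
  have hP₀S : P₀ ⊆ K.space := by
    rintro y hy
    obtain ⟨s, hs, hys⟩ := Set.mem_iUnion₂.mp hy
    rw [Geometry.SimplicialComplex.mem_space_iff]
    exact ⟨s, hs.1, hys.1⟩
  set P : Set K.space := Subtype.val ⁻¹' P₀ with hP
  have hPpc : IsPathConnected P := by
    rw [Topology.IsInducing.subtypeVal.isPathConnected_iff]
    have : Subtype.val '' P = P₀ := by
      rw [Subtype.image_preimage_coe]
      exact Set.inter_eq_right.mpr hP₀S
    rw [this]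
    exact hP₀pc
  have hzP : z ∈ P := hxP₀
  have hPu : P ⊆ u := by
    rintro w hw
    rw [← hval]
    obtain ⟨s, hs, hws⟩ := Set.mem_iUnion₂.mp hw
    exact hball hws.2
  have hPnhds : P ∈ nhds z := by
    have hO : IsOpen (B \ Cl) := Metric.isOpen_ball.sdiff hClclosed
    have hsub : Subtype.val ⁻¹' (B \ Cl) ⊆ P := by
      rintro w ⟨hwB, hwCl⟩
      have hwsp := w.2
      rw [Geometry.SimplicialComplex.mem_space_iff] at hwsp
      obtain ⟨s, hs, hws⟩ := hwsp
      have hsgood : x ∈ convexHull ℝ (s : Set (EuclideanSpace ℝ (Fin N))) := by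
        by_contra hxns
        exact hwCl (Set.mem_iUnion₂.mpr ⟨s, ⟨hs, hxns⟩, hws⟩)
      exact Set.mem_iUnion₂.mpr ⟨s, ⟨hs, hsgood⟩, hws, hwB⟩
    refine Filter.mem_of_superset ?_ hsub
    refine (hO.preimage continuous_subtype_val).mem_nhds ?_
    exact ⟨Metric.mem_ball_self hε, hxCl⟩
  exact Filter.mem_of_superset hPnhds (hPpc.subset_pathComponentIn hzP hPu)

lemma IsFinitePolyhedron.t2Space {X : Type*} [TopologicalSpace X]
    (hX : IsFinitePolyhedron X) : T2Space X := by
  obtain ⟨N, K, hfin, ⟨e⟩⟩ := hX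
  exact e.isEmbedding.t2Space

lemma IsFinitePolyhedron.locPathConnectedSpace {X : Type*} [TopologicalSpace X]
    (hX : IsFinitePolyhedron X) : LocallyPathConnectedSpace X := by
  obtain ⟨N, K, hfin, ⟨e⟩⟩ := hX
  have := SimplicialComplex.locPathConnectedSpace K hfin
  exact e.isOpenEmbedding.locPathConnectedSpace

end Polyhedron

section Counting

variable {α : Type*}

lemma ncard_biUnion_le {ι : Type*} (t : Finset ι) (S : ι → Set α)
    (hfin : ∀ i, (S i).Finite) : (⋃ i ∈ t, S i).ncard ≤ ∑ i ∈ t, (S i).ncard := by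
  classical
  induction t using Finset.induction_on with
  | empty => simp
  | @insert a s ha ih =>
    rw [Finset.set_biUnion_insert, Finset.sum_insert ha]
    exact le_trans (Set.ncard_union_le _ _) (Nat.add_le_add le_rfl ih)

lemma ncard_biUnion_eq {ι : Type*} (t : Finset ι) (S : ι → Set α)
    (hfin : ∀ i, (S i).Finite)
    (hdisj : ∀ i ∈ t, ∀ j ∈ t, i ≠ j → Disjoint (S i) (S j)) :
    (⋃ i ∈ t, S i).ncard = ∑ i ∈ t, (S i).ncard := by
  classical
  induction t using Finset.induction_on with
  | empty => simp
  | @insert a s ha ih =>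
    rw [Finset.set_biUnion_insert, Finset.sum_insert ha]
    have hdis : Disjoint (S a) (⋃ i ∈ s, S i) := by
      rw [Set.disjoint_iUnion_right]
      intro i
      rw [Set.disjoint_iUnion_right]
      intro hi
      exact hdisj a (Finset.mem_insert_self a s) i (Finset.mem_insert_of_mem hi)
        (fun h => ha (h ▸ hi))
    rw [Set.ncard_union_eq hdis (hfin a)
      (Set.Finite.biUnion s.finite_toSet fun i _ => hfin i)]
    rw [ih (fun i hi j hj hij =>
      hdisj i (Finset.mem_insert_of_mem hi) j (Finset.mem_insert_of_mem hj) hij)]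

end Counting

section Main

variable {X : Type*} [TopologicalSpace X] [T2Space X] [LocallyPathConnectedSpace X]
  [ConnectedSpace X] {n : ℕ} {f : NValuedMap X X n}

lemma submap_of_partition {l : ℕ} (P : NVPartition f l) (i : Fin l) :
    IsSubmap (P.maps i) f := by
  intro x y hy
  rw [P.values_eq x]
  exact Set.mem_iUnion.mpr ⟨i, hy⟩

lemma fib_graphset {k : ℕ} {g : NValuedMap X X k} (hsub : IsSubmap g f) (x : X) :
    fib f {z : NVGraph f | NVGraph.F z ∈ (g (NVGraph.q z)).values} x = (g x).values := by
  ext y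
  constructor
  · rintro ⟨h, hm⟩
    exact hm
  · intro hy
    exact ⟨hsub x hy, hy⟩

lemma fib_nonempty_of_clopen [Nonempty X] {C : Set (NVGraph f)} (hC : IsClopen C)
    (hne : C.Nonempty) (x : X) : (fib f C x).Nonempty := by
  obtain ⟨m, g, hg⟩ := exists_submap_of_clopen hC
  obtain ⟨z, hz⟩ := hne
  have h1 : (fib f C (NVGraph.q z)).Nonempty := ⟨NVGraph.F z, mem_fib_of_mem hz⟩
  have hm : m ≠ 0 := by
    intro hm0
    rw [← hg] at h1
    apply Set.nonempty_iff_ne_empty.mp h1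
    rw [← Set.ncard_eq_zero ((g (NVGraph.q z)).values_finite), (g (NVGraph.q z)).ncard_values]
    exact hm0
  rw [← hg x]
  exact Set.nonempty_of_ncard_ne_zero (by rw [UnordConf.ncard_values]; exact hm)

lemma card_pos_values {m : ℕ} (c : UnordConf m X) (h : c.values.Nonempty) : 0 < m := by
  rcases Nat.eq_zero_or_pos m with h0 | h1
  · exfalso
    apply Set.nonempty_iff_ne_empty.mp h
    rw [← Set.ncard_eq_zero c.values_finite, c.ncard_values]
    exact h0
  · exact h1

lemma values_nonempty_of_pos {m : ℕ} (c : UnordConf m X) (h : 0 < m) : c.values.Nonempty :=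
  Set.nonempty_of_ncard_ne_zero (by rw [c.ncard_values]; omega)

/-- Direction "⇒": an irreducible partition into `l` maps forces exactly `l` path
components of the graph. -/
lemma card_components_of_partition {l : ℕ} (P : NVPartition f l)
    (hP : P.IsIrreduciblePartition) : Nat.card (ZerothHomotopy (NVGraph f)) = l := by
  classical
  haveI := locPathConnected_graph f
  set x₀ : X := Classical.arbitrary X with hx₀def
  set Cset : Fin l → Set (NVGraph f) :=
    fun i => {z : NVGraph f | NVGraph.F z ∈ ((P.maps i) (NVGraph.q z)).values} with hCset
  have hclopen : ∀ i, IsClopen (Cset i) := fun i =>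
    isClopen_graph_of_submap (submap_of_partition P i)
  have hfib : ∀ i x, fib f (Cset i) x = ((P.maps i) x).values := fun i x =>
    fib_graphset (submap_of_partition P i) x
  have hcover : ∀ z : NVGraph f, ∃ i, z ∈ Cset i := by
    intro z
    have := z.2
    rw [P.values_eq] at this
    obtain ⟨i, hi⟩ := Set.mem_iUnion.mp this
    exact ⟨i, hi⟩
  have hne : ∀ i, (Cset i).Nonempty := by
    intro i
    obtain ⟨y, hy⟩ := values_nonempty_of_pos ((P.maps i) x₀) (P.card_pos i)
    exact ⟨⟨(x₀, y), submap_of_partition P i x₀ hy⟩, hy⟩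
  -- Each Cset i is a single path component
  have hsingle : ∀ i, ∀ z ∈ Cset i, Cset i = pathComponent z := by
    intro i z hz
    have hsub1 : pathComponent z ⊆ Cset i :=
      isPathConnected_pathComponent.isConnected.isPreconnected.subset_isClopen (hclopen i)
        ⟨z, mem_pathComponent_self z, hz⟩
    refine Set.Subset.antisymm ?_ hsub1
    by_contra hnot
    rw [Set.not_subset] at hnot
    obtain ⟨z', hz', hz'not⟩ := hnot
    set C : Set (NVGraph f) := pathComponent z with hCdef
    set D : Set (NVGraph f) := Cset i \ C with hDdef
    have hCc : IsClopen C := IsClopen.pathComponent z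
    have hDc : IsClopen D := (hclopen i).diff hCc
    have hCD : Disjoint C D := Set.disjoint_sdiff_right
    have hCDu : C ∪ D = Cset i := Set.union_diff_cancel hsub1
    obtain ⟨mC, gC, hgC⟩ := exists_submap_of_clopen hCc
    have hmC : 0 < mC := by
      obtain ⟨y, hy⟩ := fib_nonempty_of_clopen hCc ⟨z, mem_pathComponent_self z⟩ x₀
      rw [← hgC x₀] at hy
      exact card_pos_values _ ⟨y, hy⟩
    have hmD : (fib f D x₀).Nonempty :=
      fib_nonempty_of_clopen hDc ⟨z', hz', hz'not⟩ x₀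
    have hsum : mC + (fib f D x₀).ncard = P.card i := by
      have h1 : fib f C x₀ ∪ fib f D x₀ = fib f (Cset i) x₀ := by
        rw [← fib_union, hCDu]
      have h2 := Set.ncard_union_eq (fib_disjoint hCD x₀) (fib_finite C x₀) (fib_finite D x₀)
      rw [h1, hfib] at h2
      rw [UnordConf.ncard_values] at h2
      rw [h2]
      congr 1
      rw [← hgC x₀, UnordConf.ncard_values]
    have hlt : mC < P.card i := by
      have hDn : (fib f D x₀).ncard ≠ 0 := by
        rw [Ne, Set.ncard_eq_zero (fib_finite D x₀), ← Set.not_nonempty_iff_eq_empty]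
        exact not_not_intro hmD
      omega
    exact hP i ⟨mC, gC, hmC, hlt, fun x => by
      rw [hgC x, ← hfib i x]
      exact fib_mono (hCDu ▸ Set.subset_union_left) x⟩
  -- choose points
  have hzin : ∀ i, ∃ z, z ∈ Cset i := hne
  choose zi hzi using hzin
  -- distinctness of the Cset i
  have hdist : ∀ i j, Cset i = Cset j → i = j := by
    intro i j hij
    by_contra hne'
    have hvv : ∀ x, ((P.maps i) x).values = ((P.maps j) x).values := by
      intro x
      rw [← hfib i x, ← hfib j x, hij]
    have hcov : (f x₀).values ⊆ ⋃ l' ∈ Finset.univ.erase j, ((P.maps l') x₀).values := by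
      intro y hy
      rw [P.values_eq] at hy
      obtain ⟨l', hl'⟩ := Set.mem_iUnion.mp hy
      rcases eq_or_ne l' j with rfl | hne''
      · exact Set.mem_biUnion (Finset.mem_erase.mpr ⟨hne', Finset.mem_univ i⟩)
          ((hvv x₀).symm ▸ hl')
      · exact Set.mem_biUnion (Finset.mem_erase.mpr ⟨hne'', Finset.mem_univ l'⟩) hl'
    have h1 : n ≤ ∑ l' ∈ Finset.univ.erase j, P.card l' := by
      calc n = (f x₀).values.ncard := (UnordConf.ncard_values _).symm
        _ ≤ (⋃ l' ∈ Finset.univ.erase j, ((P.maps l') x₀).values).ncard :=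
            Set.ncard_le_ncard hcov (Set.Finite.biUnion (Finset.univ.erase j).finite_toSet
              (fun l' _ => UnordConf.values_finite _))
        _ ≤ ∑ l' ∈ Finset.univ.erase j, (((P.maps l') x₀).values).ncard :=
            ncard_biUnion_le _ _ (fun l' => UnordConf.values_finite _)
        _ = ∑ l' ∈ Finset.univ.erase j, P.card l' := by
            exact Finset.sum_congr rfl fun l' _ => UnordConf.ncard_values _
    have h2 : ∑ l' ∈ Finset.univ.erase j, P.card l' + P.card j = n := by
      rw [Finset.sum_erase_add _ _ (Finset.mem_univ j)]
      exact P.sum_card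
    have := P.card_pos j
    omega
  -- the bijection
  set e : Fin l → ZerothHomotopy (NVGraph f) :=
    fun i => Quotient.mk (pathSetoid (NVGraph f)) (zi i) with he
  have hbij : Function.Bijective e := by
    constructor
    · intro i j hij
      have hjoined : Joined (zi i) (zi j) := Quotient.exact hij
      apply hdist
      rw [hsingle i (zi i) (hzi i), hsingle j (zi j) (hzi j)]
      exact (pathComponent_congr (mem_pathComponent_iff.mpr hjoined)).symm
    · intro t
      obtain ⟨z, rfl⟩ := Quotient.exists_rep t
      obtain ⟨i, hi⟩ := hcover z
      refine ⟨i, ?_⟩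
      have : z ∈ pathComponent (zi i) := by rw [← hsingle i (zi i) (hzi i)]; exact hi
      exact Quotient.sound (mem_pathComponent_iff.mp this)
  have := Nat.card_eq_of_bijective e hbij
  simpa using this.symm

/-- Direction "⇐" plus the component description of the canonical irreducible partition. -/
lemma exists_canonical_partition (f : NValuedMap X X n) :
    ∃ (k : ℕ) (P : NVPartition f k) (comp : Fin k → Set (NVGraph f)),
      Nat.card (ZerothHomotopy (NVGraph f)) = k ∧ P.IsIrreduciblePartition ∧
      (∀ i, ∃ z : NVGraph f, comp i = pathComponent z) ∧
      (∀ z : NVGraph f, ∃! i, z ∈ comp i) ∧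
      (∀ (i : Fin k) (x : X), UnordConf.values ((P.maps i) x) =
        NVGraph.F '' {z : NVGraph f | NVGraph.q z = x ∧ z ∈ comp i}) := by
  classical
  haveI := locPathConnected_graph f
  set x₀ : X := Classical.arbitrary X with hx₀def
  -- finiteness of the set of path components
  haveI hfinZ : Finite (ZerothHomotopy (NVGraph f)) := by
    haveI : Finite ↥((f x₀).values) := ((f x₀).values_finite).to_subtype
    have hφ : ∀ t : ZerothHomotopy (NVGraph f), ∃ y, y ∈ fib f (pathComponent t.out) x₀ := by
      intro t
      exact fib_nonempty_of_clopen (IsClopen.pathComponent _)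
        ⟨t.out, mem_pathComponent_self _⟩ x₀
    choose φ hφs using hφ
    have hinj : Function.Injective
        (fun t : ZerothHomotopy (NVGraph f) => (⟨φ t, (hφs t).1⟩ : ↥((f x₀).values))) := by
      intro t t' htt
      have hyy : φ t = φ t' := congrArg Subtype.val htt
      obtain ⟨h1, hm1⟩ := hφs t
      obtain ⟨h2, hm2⟩ := hφs t'
      have hzeq : (⟨(x₀, φ t), h1⟩ : NVGraph f) = ⟨(x₀, φ t'), h2⟩ := by
        apply Subtype.ext
        exact Prod.ext rfl hyy
      rw [hzeq] at hm1
      have hcompeq : pathComponent t.out = pathComponent t'.out :=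
        (pathComponent_congr hm1).symm.trans (pathComponent_congr hm2)
      have hJ : Joined t.out t'.out := by
        rw [← mem_pathComponent_iff, hcompeq]
        exact mem_pathComponent_self _
      rw [← Quotient.out_eq t, ← Quotient.out_eq t']
      exact Quotient.sound hJ
    exact Finite.of_injective _ hinj
  set k : ℕ := Nat.card (ZerothHomotopy (NVGraph f)) with hk
  set ε : Fin k ≃ ZerothHomotopy (NVGraph f) := (Finite.equivFinOfCardEq rfl).symm with hε
  set comp : Fin k → Set (NVGraph f) := fun i => pathComponent (ε i).out with hcomp
  have hclopen : ∀ i, IsClopen (comp i) := fun i => IsClopen.pathComponent _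
  have hcompne : ∀ i, (comp i).Nonempty := fun i => ⟨(ε i).out, mem_pathComponent_self _⟩
  -- unique component containing each point
  have hucomp : ∀ z : NVGraph f, ∃! i, z ∈ comp i := by
    intro z
    refine ⟨ε.symm (ZerothHomotopy.mk z), ?_, ?_⟩
    · show z ∈ pathComponent (ε (ε.symm _)).out
      rw [ε.apply_symm_apply]
      rw [mem_pathComponent_iff]
      exact Quotient.mk_out (s := pathSetoid (NVGraph f)) z
    · intro i hi
      have : Joined (ε i).out z := mem_pathComponent_iff.mp hi
      have h1 : ZerothHomotopy.mk z = ε i := by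
        rw [← Quotient.out_eq (ε i)]
        exact (Quotient.sound this).symm
      rw [h1, ε.symm_apply_apply]
  -- submaps
  choose m g hg using fun i => exists_submap_of_clopen (hclopen i)
  have hmpos : ∀ i, 0 < m i := by
    intro i
    obtain ⟨y, hy⟩ := fib_nonempty_of_clopen (hclopen i) (hcompne i) x₀
    rw [← hg i x₀] at hy
    exact card_pos_values _ ⟨y, hy⟩
  have hdisj : ∀ i j, i ≠ j → Disjoint (comp i) (comp j) := by
    intro i j hij
    rw [Set.disjoint_left]
    intro z hzi hzj
    exact hij (((hucomp z).unique hzi hzj))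
  have hvals : ∀ x, (f x).values = ⋃ i, ((g i) x).values := by
    intro x
    ext y
    constructor
    · intro hy
      obtain ⟨i, hi, -⟩ := hucomp ⟨(x, y), hy⟩
      refine Set.mem_iUnion.mpr ⟨i, ?_⟩
      rw [hg i x]
      exact mem_fib_of_mem (z := ⟨(x, y), hy⟩) hi
    · intro hy
      obtain ⟨i, hi⟩ := Set.mem_iUnion.mp hy
      rw [hg i x] at hi
      exact fib_subset _ x hi
  have hsum : ∑ i, m i = n := by
    have h1 : (f x₀).values = ⋃ i ∈ (Finset.univ : Finset (Fin k)), fib f (comp i) x₀ := by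
      rw [hvals x₀]
      simp only [Finset.mem_univ, Set.iUnion_true]
      exact Set.iUnion_congr fun i => by rw [hg i x₀]
    have h2' : (⋃ i ∈ (Finset.univ : Finset (Fin k)), fib f (comp i) x₀).ncard =
        ∑ i ∈ (Finset.univ : Finset (Fin k)), (fib f (comp i) x₀).ncard :=
      ncard_biUnion_eq (Finset.univ : Finset (Fin k)) (fun i => fib f (comp i) x₀)
        (fun i => fib_finite _ _) (fun i _ j _ hij => fib_disjoint (hdisj i j hij) x₀)
    have h3 : ∑ i : Fin k, m i = ∑ i ∈ (Finset.univ : Finset (Fin k)),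
        (fib f (comp i) x₀).ncard :=
      Finset.sum_congr rfl (fun i _ => by rw [← hg i x₀, UnordConf.ncard_values])
    calc ∑ i : Fin k, m i
        = ∑ i ∈ (Finset.univ : Finset (Fin k)), (fib f (comp i) x₀).ncard := h3
      _ = (⋃ i ∈ (Finset.univ : Finset (Fin k)), fib f (comp i) x₀).ncard := h2'.symm
      _ = ((f x₀).values).ncard := by rw [← h1]
      _ = n := UnordConf.ncard_values _
  -- irreducibility
  have hirr : ∀ i, IsIrreducibleNV (g i) := by
    intro i
    rintro ⟨k', h, hk'pos, hk'lt, hsubmap⟩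
    have hsubf : IsSubmap h f := by
      intro x y hy
      have h1 : y ∈ ((g i) x).values := hsubmap x hy
      rw [hg i x] at h1
      exact fib_subset _ x h1
    set C' : Set (NVGraph f) :=
      {z : NVGraph f | NVGraph.F z ∈ ((h) (NVGraph.q z)).values} with hC'
    have hC'c : IsClopen C' := isClopen_graph_of_submap hsubf
    have hC'sub : C' ⊆ comp i := by
      intro z hz
      have h1 : NVGraph.F z ∈ ((g i) (NVGraph.q z)).values := hsubmap _ hz
      rw [hg i _] at h1
      obtain ⟨hm, hmem⟩ := h1
      rwa [graph_eta z hm] at hmem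
    have hC'ne : C'.Nonempty := by
      obtain ⟨y, hy⟩ := values_nonempty_of_pos ((h) x₀) hk'pos
      exact ⟨⟨(x₀, y), hsubf x₀ hy⟩, hy⟩
    have hC'eq : C' = comp i := by
      refine Set.Subset.antisymm hC'sub ?_
      refine isPathConnected_pathComponent.isConnected.isPreconnected.subset_isClopen hC'c ?_
      obtain ⟨z, hz⟩ := hC'ne
      exact ⟨z, hC'sub hz, hz⟩
    have : k' = m i := by
      have h1 : ((h) x₀).values = ((g i) x₀).values := by
        rw [hg i x₀, ← hC'eq, fib_graphset hsubf]
      have h2 := UnordConf.ncard_values ((h) x₀)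
      rw [h1, UnordConf.ncard_values] at h2
      exact h2.symm
    omega
  refine ⟨k, ⟨m, hmpos, g, hsum, hvals⟩, comp, rfl, hirr, fun i => ⟨(ε i).out, rfl⟩,
    hucomp, ?_⟩
  intro i x
  show ((g i) x).values = _
  rw [hg i x]
  ext y
  constructor
  · rintro ⟨hm, hmem⟩
    exact ⟨⟨(x, y), hm⟩, ⟨rfl, hmem⟩, rfl⟩
  · rintro ⟨z, ⟨hq, hc⟩, hF⟩
    subst hq
    subst hF
    exact mem_fib_of_mem hc

end Main

end

theorem statement_16 {X : Type*} [TopologicalSpace X] [ConnectedSpace X]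
    (hX : IsFinitePolyhedron X) {n : ℕ} (f : NValuedMap X X n) (k : ℕ) :
    ((∃ P : NVPartition f k, P.IsIrreduciblePartition) ↔
      Nat.card (ZerothHomotopy (NVGraph f)) = k) ∧
    ((∃ P : NVPartition f k, P.IsIrreduciblePartition) →
      ∃ (P : NVPartition f k) (comp : Fin k → Set (NVGraph f)),
        P.IsIrreduciblePartition ∧
        (∀ i, ∃ z : NVGraph f, comp i = pathComponent z) ∧
        (∀ z : NVGraph f, ∃! i, z ∈ comp i) ∧
        ∀ (i : Fin k) (x : X),
          UnordConf.values (P.maps i x) =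
            NVGraph.F '' {z : NVGraph f | NVGraph.q z = x ∧ z ∈ comp i}) := by
  have hT2 : T2Space X := hX.t2Space
  have hLPC : LocallyPathConnectedSpace X := hX.locPathConnectedSpace
  obtain ⟨k₀, P₀, comp₀, hcard, hirr, hrep, huniq, hform⟩ := exists_canonical_partition f
  constructor
  · constructor
    · rintro ⟨P, hP⟩
      exact card_components_of_partition P hP
    · intro h
      have hkk : k₀ = k := by rw [← hcard, h]
      subst hkk
      exact ⟨P₀, hirr⟩
  · rintro ⟨P, hP⟩
    have h := card_components_of_partition P hP
    have hkk : k₀ = k := by rw [← hcard, h]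
    subst hkk
    exact ⟨P₀, comp₀, hirr, hrep, huniq, hform⟩
end
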